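/- arXiv:1209.3391 — 6 statements merged into one kernel-verified Lean document; each statement's English description precedes it below -/
import Mathlib

section
/- Let μ be a σ-finite atomless measure on a measurable space and let L¹(μ) denote the Banach space of (equivalence classes of) complex-valued μ-integrable functions with norm ‖f‖₁ = ∫|f| dμ. Then for every f ∈ L¹(μ) there exists g ∈ L¹(μ) such that ‖f + g‖₁ = ‖f − g‖₁ = ‖f‖₁ = ‖g‖₁. -/
open MeasureTheory

/-- An atom of a measure `μ`: a measurable set `A` with `0 < μ A < ∞` such that every
measurable subset `B ⊆ A` satisfies `μ B = 0` or `μ B = μ A`. -/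
def IsMeasureAtom {α : Type*} [MeasurableSpace α] (μ : Measure α) (A : Set α) : Prop :=
  MeasurableSet A ∧ 0 < μ A ∧ μ A < ⊤ ∧
    ∀ B, B ⊆ A → MeasurableSet B → μ B = 0 ∨ μ B = μ A

section Aux

variable {α : Type*} [MeasurableSpace α]

/-- From a splitting property, get subsets of arbitrarily small positive measure. -/
lemma exists_small_subset (ν : Measure α) [IsFiniteMeasure ν]
    (hsplit : ∀ A, MeasurableSet A → 0 < ν A →
      ∃ B, B ⊆ A ∧ MeasurableSet B ∧ 0 < ν B ∧ ν B < ν A)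
    (A : Set α) (hA : MeasurableSet A) (hpos : 0 < ν A) (ε : ENNReal) (hε : ε ≠ 0) :
    ∃ B, B ⊆ A ∧ MeasurableSet B ∧ 0 < ν B ∧ ν B ≤ ε := by
  have half : ∀ A, MeasurableSet A → 0 < ν A →
      ∃ B, B ⊆ A ∧ MeasurableSet B ∧ 0 < ν B ∧ ν B ≤ ν A / 2 := by
    intro A hA hpos
    obtain ⟨B, hBA, hB, hB0, hBlt⟩ := hsplit A hA hpos
    by_cases hle : ν B ≤ ν A / 2
    · exact ⟨B, hBA, hB, hB0, hle⟩
    · have hsum : ν B + ν (A \ B) = ν A := by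
        rw [measure_add_diff hB.nullMeasurableSet A, Set.union_eq_self_of_subset_left hBA]
      refine ⟨A \ B, Set.diff_subset, hA.diff hB, ?_, ?_⟩
      · rcases eq_or_ne (ν (A \ B)) 0 with h0 | h0
        · exact absurd (by rw [← hsum, h0, add_zero]) (ne_of_lt hBlt)
        · exact pos_iff_ne_zero.2 h0
      ·
        have h2 : ν A / 2 < ν B := lt_of_not_ge hle
        by_contra hgt
        push_neg at hgt
        have : ν A / 2 + ν A / 2 < ν B + ν (A \ B) :=
          ENNReal.add_lt_add h2 hgt
        rw [ENNReal.add_halves, hsum] at this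
        exact lt_irrefl _ this
  have iter : ∀ n : ℕ, ∀ A, MeasurableSet A → 0 < ν A →
      ∃ B, B ⊆ A ∧ MeasurableSet B ∧ 0 < ν B ∧ ν B ≤ ν A / 2 ^ n := by
    intro n
    induction n with
    | zero => intro A hA hpos; exact ⟨A, subset_rfl, hA, hpos, by simp⟩
    | succ n ih =>
      intro A hA hpos
      obtain ⟨B, hBA, hB, hB0, hBle⟩ := ih A hA hpos
      obtain ⟨C, hCB, hC, hC0, hCle⟩ := half B hB hB0
      refine ⟨C, hCB.trans hBA, hC, hC0, ?_⟩
      calc ν C ≤ ν B / 2 := hCle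
        _ ≤ ν A / 2 ^ n / 2 := by gcongr
        _ = ν A / 2 ^ (n + 1) := by
            rw [pow_succ, div_eq_mul_inv, div_eq_mul_inv, div_eq_mul_inv, mul_assoc,
              ← ENNReal.mul_inv (by norm_num) (by norm_num)]
  have hAtop : ν A ≠ ⊤ := measure_ne_top ν A
  rcases eq_or_ne ε ⊤ with hε' | hε'
  · obtain ⟨B, h1, h2, h3, _⟩ := iter 0 A hA hpos
    exact ⟨B, h1, h2, h3, hε' ▸ le_top⟩
  obtain ⟨n, hn⟩ := ENNReal.exists_nat_gt (ENNReal.div_lt_top hAtop hε).ne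
  obtain ⟨B, h1, h2, h3, h4⟩ := iter n A hA hpos
  refine ⟨B, h1, h2, h3, h4.trans ?_⟩
  have hn2 : ν A / ε < 2 ^ n := lt_of_lt_of_le hn (by exact_mod_cast (Nat.lt_two_pow_self (n := n)) |>.le)
  have : ν A < 2 ^ n * ε := by
    rw [ENNReal.div_lt_iff (Or.inl hε) (Or.inl hε')] at hn2
    exact hn2
  rw [ENNReal.div_le_iff (by positivity) (by simp)]
  rw [mul_comm] at this
  exact this.le

/-- Sierpiński: a finite measure with the splitting property attains the value `ν univ / 2`. -/
lemma exists_half_set (ν : Measure α) [IsFiniteMeasure ν]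
    (hsplit : ∀ A, MeasurableSet A → 0 < ν A →
      ∃ B, B ⊆ A ∧ MeasurableSet B ∧ 0 < ν B ∧ ν B < ν A) :
    ∃ S, MeasurableSet S ∧ ν S = ν Set.univ / 2 := by
  set r : ENNReal := ν Set.univ / 2 with hr
  rcases eq_or_ne (ν Set.univ) 0 with h0 | h0
  · exact ⟨∅, MeasurableSet.empty, by simp [hr, h0]⟩
  have hrtop : r ≠ ⊤ := by
    simp only [hr]
    exact (ENNReal.div_lt_top (measure_ne_top ν _) (by norm_num)).ne
  -- the step: for any admissible S, choose an almost-maximal disjoint addition B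
  have step : ∀ S : Set α, ∃ B : Set α, MeasurableSet S → ν S ≤ r →
      MeasurableSet B ∧ B ⊆ Sᶜ ∧ ν S + ν B ≤ r ∧
      ∀ C, MeasurableSet C → C ⊆ Sᶜ → ν S + ν C ≤ r → ν C ≤ 2 * ν B := by
    intro S
    by_cases hS : MeasurableSet S ∧ ν S ≤ r
    · obtain ⟨hSm, hSr⟩ := hS
      set T : Set ENNReal :=
        {t | ∃ C, MeasurableSet C ∧ C ⊆ Sᶜ ∧ ν S + ν C ≤ r ∧ ν C = t} with hT
      have h0T : (0 : ENNReal) ∈ T :=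
        ⟨∅, MeasurableSet.empty, Set.empty_subset _, by simpa using hSr, by simp⟩
      have hTle : ∀ t ∈ T, t ≤ r := by
        rintro t ⟨C, _, _, hCr, rfl⟩
        exact le_trans (le_add_self) hCr
      set t := sSup T with ht
      have htr : t ≤ r := sSup_le hTle
      rcases eq_or_ne t 0 with ht0 | ht0
      · refine ⟨∅, fun _ _ => ⟨MeasurableSet.empty, Set.empty_subset _,
          by simpa using hSr, ?_⟩⟩
        intro C hC hCS hCr
        have : ν C ≤ t := le_sSup ⟨C, hC, hCS, hCr, rfl⟩
        simpa [ht0] using this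
      · have httop : t ≠ ⊤ := fun h => hrtop (top_le_iff.mp (h ▸ htr))
        have : t / 2 < t := ENNReal.half_lt_self ht0 httop
        obtain ⟨u, huT, hu⟩ := lt_sSup_iff.mp (ht ▸ this)
        obtain ⟨C, hCm, hCS, hCr, rfl⟩ := huT
        refine ⟨C, fun _ _ => ⟨hCm, hCS, hCr, ?_⟩⟩
        intro D hD hDS hDr
        have h1 : ν D ≤ t := le_sSup ⟨D, hD, hDS, hDr, rfl⟩
        have h2 : t < 2 * ν C := by
          rw [ENNReal.div_lt_iff (by norm_num) (by norm_num)] at hu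
          rwa [mul_comm] at hu
        exact h1.trans h2.le
    · exact ⟨∅, fun h1 h2 => absurd ⟨h1, h2⟩ hS⟩
  choose Bf hBf using step
  -- the increasing sequence of sets
  let Sseq : ℕ → Set α := fun n => Nat.rec (∅ : Set α) (fun _ S => S ∪ Bf S) n
  have hSseq_succ : ∀ n, Sseq (n + 1) = Sseq n ∪ Bf (Sseq n) := fun n => rfl
  have key : ∀ n, MeasurableSet (Sseq n) ∧ ν (Sseq n) ≤ r := by
    intro n
    induction n with
    | zero =>
      refine ⟨MeasurableSet.empty, ?_⟩
      show ν (∅ : Set α) ≤ r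
      simp
    | succ n ih =>
      obtain ⟨hm, hle⟩ := ih
      obtain ⟨hBm, hBS, hBr, _⟩ := hBf (Sseq n) hm hle
      constructor
      · rw [hSseq_succ]; exact hm.union hBm
      · rw [hSseq_succ]
        exact le_trans (measure_union_le _ _) hBr
  have hmeas : ∀ n, MeasurableSet (Sseq n) := fun n => (key n).1
  have hler : ∀ n, ν (Sseq n) ≤ r := fun n => (key n).2
  have hspec : ∀ n, MeasurableSet (Bf (Sseq n)) ∧ Bf (Sseq n) ⊆ (Sseq n)ᶜ ∧
      ν (Sseq n) + ν (Bf (Sseq n)) ≤ r ∧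
      ∀ C, MeasurableSet C → C ⊆ (Sseq n)ᶜ → ν (Sseq n) + ν C ≤ r →
        ν C ≤ 2 * ν (Bf (Sseq n)) :=
    fun n => hBf (Sseq n) (hmeas n) (hler n)
  have hνsucc : ∀ n, ν (Sseq (n + 1)) = ν (Sseq n) + ν (Bf (Sseq n)) := by
    intro n
    rw [hSseq_succ]
    exact measure_union (disjoint_compl_right.mono_right (hspec n).2.1) (hspec n).1
  have hmono : Monotone Sseq := by
    apply monotone_nat_of_le_succ
    intro n
    rw [hSseq_succ]
    exact Set.subset_union_left
  set Sfull := ⋃ n, Sseq n with hSfull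
  have hSfullm : MeasurableSet Sfull := MeasurableSet.iUnion hmeas
  have hSfull_le : ν Sfull ≤ r := by
    rw [hSfull, (hmono.directed_le).measure_iUnion]
    exact iSup_le hler
  refine ⟨Sfull, hSfullm, ?_⟩
  by_contra hne
  have hlt : ν Sfull < r := lt_of_le_of_ne hSfull_le hne
  -- the complement has positive measure
  have hcomp : 0 < ν Sfullᶜ := by
    rcases eq_or_ne (ν Sfullᶜ) 0 with h | h
    · exfalso
      have : ν Set.univ ≤ ν Sfull + ν Sfullᶜ := by
        rw [← Set.union_compl_self Sfull] at *
        exact measure_union_le _ _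
      rw [h, add_zero] at this
      have h2 : r < ν Set.univ := by
        rw [hr]
        exact ENNReal.half_lt_self h0 (measure_ne_top ν _)
      exact absurd (this.trans hlt.le) (not_le.mpr h2)
    · exact pos_iff_ne_zero.mpr h
  obtain ⟨C, hCsub, hCm, hC0, hCle⟩ := exists_small_subset ν hsplit Sfullᶜ hSfullm.compl
    hcomp (r - ν Sfull) (by simpa [tsub_eq_zero_iff_le, not_le] using hlt)
  -- for every n, C is an admissible addition to Sseq n
  have hadm : ∀ n, ν (Sseq n) + ν C ≤ r := by
    intro n
    have h1 : ν (Sseq n) ≤ ν Sfull := measure_mono (Set.subset_iUnion Sseq n)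
    calc ν (Sseq n) + ν C ≤ ν Sfull + (r - ν Sfull) := by
          exact add_le_add h1 hCle
      _ = r := by
          rw [add_tsub_cancel_of_le hlt.le]
  have hCB : ∀ n, ν C / 2 ≤ ν (Bf (Sseq n)) := by
    intro n
    have hCsub' : C ⊆ (Sseq n)ᶜ :=
      hCsub.trans (Set.compl_subset_compl.mpr (Set.subset_iUnion Sseq n))
    have := (hspec n).2.2.2 C hCm hCsub' (hadm n)
    rw [ENNReal.div_le_iff (by norm_num) (by norm_num)]
    rwa [mul_comm]
  -- ν (Sseq n) grows linearly, contradicting the bound r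
  have hgrow : ∀ n : ℕ, (n : ENNReal) * (ν C / 2) ≤ ν (Sseq n) := by
    intro n
    induction n with
    | zero => simp
    | succ n ih =>
      rw [hνsucc n]
      push_cast
      rw [add_mul, one_mul]
      exact add_le_add ih (hCB n)
  have hc2 : ν C / 2 ≠ 0 := by
    simp only [ne_eq, ENNReal.div_eq_zero_iff]
    push_neg
    exact ⟨hC0.ne', by norm_num⟩
  have hc2top : ν C / 2 ≠ ⊤ := by
    refine (ENNReal.div_lt_top (measure_ne_top ν C) (by norm_num)).ne
  obtain ⟨n, hn⟩ := ENNReal.exists_nat_gt (ENNReal.div_lt_top hrtop hc2).ne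
  have : r < (n : ENNReal) * (ν C / 2) := by
    rw [ENNReal.div_lt_iff (Or.inl hc2) (Or.inl hc2top)] at hn
    exact hn
  exact absurd ((this.trans_le (hgrow n)).trans_le (hler n)) (lt_irrefl r)

end Aux

/-- For a σ-finite atomless measure `μ`, for every `f ∈ L¹(μ)` there exists `g ∈ L¹(μ)`
with `‖f + g‖₁ = ‖f - g‖₁ = ‖f‖₁ = ‖g‖₁`. -/
theorem norm_equation_solvable_of_atomless {α : Type*} [MeasurableSpace α]
    (μ : Measure α) [SigmaFinite μ] (hμ : ∀ A : Set α, ¬ IsMeasureAtom μ A)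
    (f : Lp ℂ 1 μ) :
    ∃ g : Lp ℂ 1 μ, ‖f + g‖ = ‖f‖ ∧ ‖f - g‖ = ‖f‖ ∧ ‖g‖ = ‖f‖ := by
  classical
  -- a measurable representative of f
  obtain ⟨φ, hφsm, hφae⟩ := (Lp.aestronglyMeasurable f)
  have hφm : Measurable φ := hφsm.measurable
  set w : α → ENNReal := fun x => (‖φ x‖₊ : ENNReal) with hw
  have hwm : Measurable w := hφm.nnnorm.coe_nnreal_ennreal
  set ν : Measure α := μ.withDensity w with hν
  have hν_apply : ∀ A : Set α, MeasurableSet A → ν A = ∫⁻ x in A, w x ∂μ := by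
    intro A hA; rw [hν, withDensity_apply _ hA]
  have hν_univ : ν Set.univ = eLpNorm f 1 μ := by
    rw [hν_apply _ MeasurableSet.univ, Measure.restrict_univ,
      eLpNorm_congr_ae hφae, eLpNorm_one_eq_lintegral_enorm]
    rfl
  have hνfin : IsFiniteMeasure ν := by
    constructor
    rw [hν_univ]
    exact Lp.eLpNorm_lt_top f
  -- the splitting property for ν, from atomlessness of μ
  have hsplit : ∀ A, MeasurableSet A → 0 < ν A →
      ∃ B, B ⊆ A ∧ MeasurableSet B ∧ 0 < ν B ∧ ν B < ν A := by
    intro A hA hpos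
    by_contra hcon
    push_neg at hcon
    -- A is a ν-atom : every measurable subset has measure 0 or ν A
    have hatom : ∀ B, B ⊆ A → MeasurableSet B → ν B = 0 ∨ ν B = ν A := by
      intro B hBA hB
      rcases eq_or_ne (ν B) 0 with h | h
      · exact Or.inl h
      · have h1 := hcon B hBA hB (pos_iff_ne_zero.mpr h)
        exact Or.inr (le_antisymm (measure_mono hBA) h1)
    -- find a piece of finite μ-measure carrying all the ν-mass
    have htend : ∀ ε, 0 < ε → ε ≠ ⊤ → ∃ n, ν A - ν (A ∩ spanningSets μ n) < ε := by
      intro ε hε hεtop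
      have hU : (⋃ n, A ∩ spanningSets μ n) = A := by
        rw [← Set.inter_iUnion, iUnion_spanningSets, Set.inter_univ]
      have hmono : Monotone (fun n => A ∩ spanningSets μ n) :=
        fun m n hmn => Set.inter_subset_inter_right A (monotone_spanningSets μ hmn)
      have hsup : ν A = ⨆ n, ν (A ∩ spanningSets μ n) := by
        conv_lhs => rw [← hU]
        exact (hmono.directed_le).measure_iUnion
      by_contra hcon2
      push_neg at hcon2
      have hle : ∀ n, ν (A ∩ spanningSets μ n) ≤ ν A - ε := by
        intro n
        have h2 := hcon2 n
        have h3 : ν (A ∩ spanningSets μ n) ≤ ν A := measure_mono Set.inter_subset_left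
        have h5 : ν (A ∩ spanningSets μ n) + ε ≤ ν A := by
          calc ν (A ∩ spanningSets μ n) + ε
              ≤ ν (A ∩ spanningSets μ n) + (ν A - ν (A ∩ spanningSets μ n)) :=
                add_le_add le_rfl h2
            _ = ν A := add_tsub_cancel_of_le h3
        exact ENNReal.le_sub_of_add_le_right hεtop h5
      have h6 : ν A ≤ ν A - ε := hsup.trans_le (iSup_le hle)
      have h7 : ν A - ε < ν A :=
        ENNReal.sub_lt_self (measure_ne_top ν A) (hpos.ne') (hε.ne')
      exact absurd h6 (not_le.mpr h7)
    obtain ⟨n, hn⟩ := htend (ν A) hpos (measure_ne_top ν A)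
    have hAn : ν (A ∩ spanningSets μ n) = ν A := by
      rcases hatom (A ∩ spanningSets μ n) Set.inter_subset_left
        (hA.inter (measurableSet_spanningSets μ n)) with h | h
      · exfalso
        rw [h, tsub_zero] at hn
        exact lt_irrefl _ hn
      · exact h
    -- restrict further to where w is positive
    set P : Set α := {x | w x ≠ 0} with hP
    have hPm : MeasurableSet P := hwm (measurableSet_singleton 0).compl
    have hνP : ∀ E : Set α, MeasurableSet E → ν (E \ P) = 0 := by
      intro E hE
      rw [hν_apply _ (hE.diff hPm)]
      have : ∀ x ∈ E \ P, w x = 0 := by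
        intro x hx
        have := hx.2
        simpa [hP] using this
      calc ∫⁻ x in E \ P, w x ∂μ = ∫⁻ _ in E \ P, 0 ∂μ :=
            setLIntegral_congr_fun (hE.diff hPm) (fun x hx => this x hx)
        _ = 0 := lintegral_zero
    set A' : Set α := A ∩ spanningSets μ n ∩ P with hA'
    have hA'm : MeasurableSet A' := (hA.inter (measurableSet_spanningSets μ n)).inter hPm
    have hA'sub : A' ⊆ A := fun x hx => hx.1.1
    have hνA' : ν A' = ν A := by
      have h1 : ν (A ∩ spanningSets μ n) ≤ ν A' + ν ((A ∩ spanningSets μ n) \ P) := by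
        have : A ∩ spanningSets μ n ⊆ A' ∪ ((A ∩ spanningSets μ n) \ P) := by
          intro x hx
          by_cases hxP : x ∈ P
          · exact Or.inl ⟨hx, hxP⟩
          · exact Or.inr ⟨hx, hxP⟩
        exact le_trans (measure_mono this) (measure_union_le _ _)
      rw [hνP _ (hA.inter (measurableSet_spanningSets μ n)), add_zero, hAn] at h1
      exact le_antisymm (measure_mono (hA'sub)) h1
    -- μ A' is positive and finite
    have hμA'fin : μ A' < ⊤ :=
      lt_of_le_of_lt (measure_mono (fun x hx => hx.1.2)) (measure_spanningSets_lt_top μ n)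
    have hwzero : ∀ E : Set α, MeasurableSet E → E ⊆ P → ν E = 0 → μ E = 0 := by
      intro E hE hEP hνE
      rw [hν_apply _ hE] at hνE
      have h1 := (setLIntegral_eq_zero_iff hE hwm).mp hνE
      have h2 : ∀ᵐ x ∂μ, x ∉ E := by
        filter_upwards [h1] with x hx
        intro hxE
        exact (hEP hxE) (hx hxE)
      exact measure_eq_zero_iff_ae_notMem.mpr h2
    have hμA'pos : 0 < μ A' := by
      rcases eq_or_ne (μ A') 0 with h | h
      · exfalso
        have : ν A' = 0 := by
          rw [hν]
          exact (withDensity_absolutelyContinuous μ w) h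
        rw [hνA'] at this
        exact absurd this hpos.ne'
      · exact pos_iff_ne_zero.mpr h
    -- apply atomlessness of μ to A'
    have hA'atom := hμ A'
    rw [IsMeasureAtom] at hA'atom
    push_neg at hA'atom
    obtain ⟨B, hBA', hBm, hB0, hBA⟩ := hA'atom hA'm hμA'pos hμA'fin
    have hBP : B ⊆ P := hBA'.trans (fun x hx => hx.2)
    have hνB : ν B = ν A := by
      rcases hatom B (hBA'.trans hA'sub) hBm with h | h
      · exact absurd (hwzero B hBm hBP h) hB0
      · exact h
    -- then A' \ B is ν-null, hence μ-null, contradicting μ B < μ A'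
    have hdiff : ν (A' \ B) = 0 := by
      have h1 : ν B + ν (A' \ B) = ν A' := by
        rw [measure_add_diff hBm.nullMeasurableSet A', Set.union_eq_self_of_subset_left hBA']
      rw [hνB, hνA'] at h1
      have h2 : ν A ≠ ⊤ := measure_ne_top ν A
      nth_rewrite 2 [← add_zero (ν A)] at h1
      exact (ENNReal.add_right_inj h2).mp h1
    have hμdiff : μ (A' \ B) = 0 :=
      hwzero _ (hA'm.diff hBm) (fun x hx => hx.1.2) hdiff
    have : μ A' ≤ μ B := by
      calc μ A' ≤ μ B + μ (A' \ B) := by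
            refine le_trans (measure_mono ?_) (measure_union_le _ _)
            intro x hx
            by_cases hxB : x ∈ B
            · exact Or.inl hxB
            · exact Or.inr ⟨hx, hxB⟩
        _ = μ B := by rw [hμdiff, add_zero]
    exact hBA (le_antisymm (measure_mono hBA') this)
  -- get the half-mass set
  obtain ⟨S, hSm, hShalf⟩ := exists_half_set ν hsplit
  -- define g
  set ψ : α → ℂ := fun x => if x ∈ S then φ x else -φ x with hψ
  have hψm : Measurable ψ := Measurable.ite hSm hφm hφm.neg
  have hψnorm : ∀ x, ‖ψ x‖₊ = ‖φ x‖₊ := by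
    intro x
    by_cases hx : x ∈ S <;> simp [hψ, hx]
  have hψmem : MemLp ψ 1 μ := by
    constructor
    · exact hψm.aestronglyMeasurable
    · rw [eLpNorm_one_eq_lintegral_enorm]
      simp only [enorm_eq_nnnorm]
      have : ∫⁻ x, (‖ψ x‖₊ : ENNReal) ∂μ = ∫⁻ x, (‖φ x‖₊ : ENNReal) ∂μ := by
        apply lintegral_congr
        intro x
        rw [hψnorm x]
      rw [this]
      simp only [← enorm_eq_nnnorm]
      rw [← eLpNorm_one_eq_lintegral_enorm, ← eLpNorm_congr_ae hφae]
      exact Lp.eLpNorm_lt_top f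
  refine ⟨hψmem.toLp ψ, ?_, ?_, ?_⟩
  -- some auxiliary computations
  · -- ‖f + g‖ = ‖f‖
    have hcoe : (f + hψmem.toLp ψ : Lp ℂ 1 μ) =ᵐ[μ] fun x => φ x + ψ x := by
      filter_upwards [Lp.coeFn_add f (hψmem.toLp ψ), hψmem.coeFn_toLp, hφae] with x h1 h2 h3
      rw [h1]
      simp only [Pi.add_apply, h2, h3]
    rw [Lp.norm_def, eLpNorm_congr_ae hcoe, Lp.norm_def, eLpNorm_congr_ae hφae]
    congr 1
    rw [eLpNorm_one_eq_lintegral_enorm, eLpNorm_one_eq_lintegral_enorm]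
    have hpt : ∀ x, (‖φ x + ψ x‖₊ : ENNReal) = S.indicator (fun x => 2 * (‖φ x‖₊ : ENNReal)) x := by
      intro x
      by_cases hx : x ∈ S
      · simp only [hψ, hx, if_pos, Set.indicator_of_mem hx]
        rw [show φ x + φ x = (2 : ℂ) * φ x by ring]
        push_cast
        rw [nnnorm_mul]
        push_cast
        norm_num
      · simp [hψ, hx, Set.indicator_of_notMem hx]
    calc ∫⁻ x, (‖φ x + ψ x‖₊ : ENNReal) ∂μ
        = ∫⁻ x, S.indicator (fun x => 2 * (‖φ x‖₊ : ENNReal)) x ∂μ := lintegral_congr hpt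
      _ = ∫⁻ x in S, 2 * (‖φ x‖₊ : ENNReal) ∂μ := lintegral_indicator hSm _
      _ = 2 * ∫⁻ x in S, (‖φ x‖₊ : ENNReal) ∂μ := lintegral_const_mul 2 (hφm.nnnorm.coe_nnreal_ennreal)
      _ = 2 * ν S := by rw [hν_apply S hSm]
      _ = 2 * (ν Set.univ / 2) := by rw [hShalf]
      _ = ν Set.univ := by
          rw [ENNReal.mul_div_cancel (by norm_num) (by norm_num)]
      _ = ∫⁻ x, (‖φ x‖₊ : ENNReal) ∂μ := by
          rw [hν_apply _ MeasurableSet.univ, Measure.restrict_univ]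
  · -- ‖f - g‖ = ‖f‖
    have hcoe : (f - hψmem.toLp ψ : Lp ℂ 1 μ) =ᵐ[μ] fun x => φ x - ψ x := by
      filter_upwards [Lp.coeFn_sub f (hψmem.toLp ψ), hψmem.coeFn_toLp, hφae] with x h1 h2 h3
      rw [h1]
      simp only [Pi.sub_apply, h2, h3]
    rw [Lp.norm_def, eLpNorm_congr_ae hcoe, Lp.norm_def, eLpNorm_congr_ae hφae]
    congr 1
    rw [eLpNorm_one_eq_lintegral_enorm, eLpNorm_one_eq_lintegral_enorm]
    have hνSc : ν Sᶜ = ν Set.univ / 2 := by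
      have h1 : ν S + ν Sᶜ = ν Set.univ := measure_add_measure_compl hSm
      rw [hShalf] at h1
      have h2 : ν Set.univ / 2 + ν Set.univ / 2 = ν Set.univ := ENNReal.add_halves _
      have h3 : ν Set.univ / 2 ≠ ⊤ :=
        (ENNReal.div_lt_top (measure_ne_top ν _) (by norm_num)).ne
      nth_rewrite 2 [← h2] at h1
      exact (ENNReal.add_right_inj h3).mp h1
    have hpt : ∀ x, (‖φ x - ψ x‖₊ : ENNReal) = Sᶜ.indicator (fun x => 2 * (‖φ x‖₊ : ENNReal)) x := by
      intro x
      by_cases hx : x ∈ S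
      · simp [hψ, hx, Set.indicator_of_notMem (by simpa using hx : x ∉ Sᶜ)]
      · simp only [hψ, hx, if_false, Set.indicator_of_mem (by simpa using hx : x ∈ Sᶜ)]
        rw [show φ x - (-φ x) = (2 : ℂ) * φ x by ring]
        push_cast
        rw [nnnorm_mul]
        push_cast
        norm_num
    calc ∫⁻ x, (‖φ x - ψ x‖₊ : ENNReal) ∂μ
        = ∫⁻ x, Sᶜ.indicator (fun x => 2 * (‖φ x‖₊ : ENNReal)) x ∂μ := lintegral_congr hpt
      _ = ∫⁻ x in Sᶜ, 2 * (‖φ x‖₊ : ENNReal) ∂μ := lintegral_indicator hSm.compl _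
      _ = 2 * ∫⁻ x in Sᶜ, (‖φ x‖₊ : ENNReal) ∂μ := lintegral_const_mul 2 (hφm.nnnorm.coe_nnreal_ennreal)
      _ = 2 * ν Sᶜ := by rw [hν_apply Sᶜ hSm.compl]
      _ = 2 * (ν Set.univ / 2) := by rw [hνSc]
      _ = ν Set.univ := by
          rw [ENNReal.mul_div_cancel (by norm_num) (by norm_num)]
      _ = ∫⁻ x, (‖φ x‖₊ : ENNReal) ∂μ := by
          rw [hν_apply _ MeasurableSet.univ, Measure.restrict_univ]
  · -- ‖g‖ = ‖f‖
    rw [Lp.norm_def, eLpNorm_congr_ae hψmem.coeFn_toLp, Lp.norm_def, eLpNorm_congr_ae hφae]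
    congr 1
    rw [eLpNorm_one_eq_lintegral_enorm, eLpNorm_one_eq_lintegral_enorm]
    apply lintegral_congr
    intro x
    simp only [enorm_eq_nnnorm]
    rw [hψnorm x]
end

section
/- Let μ be a nonzero σ-finite measure on a measurable space. Then the following are equivalent: (i) for every f ∈ L¹(μ) there exists g ∈ L¹(μ) with ‖f + g‖₁ = ‖f − g‖₁ = ‖f‖₁ = ‖g‖₁; (ii) μ is atomless. -/
open MeasureTheory

open scoped ENNReal

lemma eLpNorm_one_eq_lintegral_nnnorm_C {α : Type*} [MeasurableSpace α] {μ : Measure α}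
    {f : α → ℂ} : eLpNorm f 1 μ = ∫⁻ x, (‖f x‖₊ : ℝ≥0∞) ∂μ :=
  eLpNorm_one_eq_lintegral_enorm

lemma IsMeasureAtom.ae_const {α : Type*} [MeasurableSpace α] {μ : Measure α} {A : Set α}
    (hA : IsMeasureAtom μ A) {g : α → ℂ} (hg : Measurable g) :
    ∃ c : ℂ, ∀ᵐ x ∂μ, x ∈ A → g x = c := by
  obtain ⟨hAm, hA0, hAt, hatom⟩ := hA
  -- for each n, a full-measure closed ball of radius (1/2)^n
  have key : ∀ n : ℕ, ∃ z : ℂ, μ (A ∩ g ⁻¹' Metric.closedBall z ((1/2) ^ n)) = μ A := by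
    intro n
    by_contra hcon
    push_neg at hcon
    set u : ℕ → ℂ := TopologicalSpace.denseSeq ℂ
    have hd : DenseRange u := TopologicalSpace.denseRange_denseSeq ℂ
    have hcov : A ⊆ ⋃ i, A ∩ g ⁻¹' Metric.closedBall (u i) ((1/2) ^ n) := by
      intro x hx
      obtain ⟨i, hi⟩ := (Metric.denseRange_iff.1 hd) (g x) ((1/2) ^ n) (by positivity)
      exact Set.mem_iUnion.2 ⟨i, hx, by simpa [Metric.mem_closedBall, dist_comm] using hi.le⟩
    have hzero : ∀ i, μ (A ∩ g ⁻¹' Metric.closedBall (u i) ((1/2) ^ n)) = 0 := by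
      intro i
      rcases hatom _ Set.inter_subset_left
        (hAm.inter (hg measurableSet_closedBall)) with h | h
      · exact h
      · exact absurd h (hcon (u i))
    have : μ A ≤ 0 := by
      calc μ A ≤ μ (⋃ i, A ∩ g ⁻¹' Metric.closedBall (u i) ((1/2) ^ n)) := measure_mono hcov
        _ = 0 := by rw [measure_iUnion_null hzero]
    exact absurd (le_antisymm this zero_le) hA0.ne'
  choose z hz using key
  set F : ℕ → Set α := fun n => A ∩ g ⁻¹' Metric.closedBall (z n) ((1/2) ^ n) with hF
  have hFsub : ∀ n, F n ⊆ A := fun n => Set.inter_subset_left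
  have hFnull : ∀ n, μ (A \ F n) = 0 := by
    intro n
    have hm : MeasurableSet (F n) := hAm.inter (hg measurableSet_closedBall)
    rw [measure_diff (hFsub n) hm.nullMeasurableSet (lt_of_le_of_lt (measure_mono (hFsub n)) hAt).ne,
      hz n, tsub_self]
  set N : Set α := ⋃ n, A \ F n with hN
  have hNnull : μ N = 0 := measure_iUnion_null hFnull
  have hsub : ∀ x, x ∈ A → x ∉ N → ∀ n, x ∈ F n := by
    intro x hx hxN n
    by_contra hno
    exact hxN (Set.mem_iUnion.2 ⟨n, hx, hno⟩)
  have hne : ∃ x, x ∈ A ∧ x ∉ N := by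
    by_contra hcon
    push_neg at hcon
    have : A ⊆ N := fun x hx => hcon x hx
    exact absurd (le_antisymm (le_trans (measure_mono this) hNnull.le) zero_le) hA0.ne'
  obtain ⟨x₀, hx₀A, hx₀N⟩ := hne
  refine ⟨g x₀, ?_⟩
  have hclaim : ∀ x, x ∈ A → x ∉ N → g x = g x₀ := by
    intro x hx hxN
    have hdist : ∀ n : ℕ, dist (g x) (g x₀) ≤ 2 * (1/2) ^ n := by
      intro n
      have h1 : g x ∈ Metric.closedBall (z n) ((1/2) ^ n) := (hsub x hx hxN n).2
      have h2 : g x₀ ∈ Metric.closedBall (z n) ((1/2) ^ n) := (hsub x₀ hx₀A hx₀N n).2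
      calc dist (g x) (g x₀) ≤ dist (g x) (z n) + dist (z n) (g x₀) := dist_triangle _ _ _
        _ ≤ (1/2) ^ n + (1/2) ^ n := by
            exact add_le_add h1 (by rwa [dist_comm])
        _ = 2 * (1/2) ^ n := by ring
    have hlim : Filter.Tendsto (fun n : ℕ => 2 * (1/2 : ℝ) ^ n) Filter.atTop (nhds 0) := by
      have := tendsto_pow_atTop_nhds_zero_of_lt_one (by norm_num : (0:ℝ) ≤ 1/2) (by norm_num)
      simpa using this.const_mul 2
    have : dist (g x) (g x₀) ≤ 0 := ge_of_tendsto' hlim hdist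
    exact eq_of_dist_eq_zero (le_antisymm this dist_nonneg)
  rw [MeasureTheory.ae_iff]
  refine measure_mono_null ?_ hNnull
  intro x hx
  simp only [Set.mem_setOf_eq, Classical.not_imp] at hx
  by_contra hxN
  exact hx.2 (hclaim x hx.1 hxN)

lemma noAtoms_withDensity {α : Type*} [MeasurableSpace α] {μ : Measure α} [SigmaFinite μ]
    (hμ : ∀ A : Set α, ¬ IsMeasureAtom μ A) {h : α → ℝ≥0∞} (hh : Measurable h)
    (A : Set α) : ¬ IsMeasureAtom (μ.withDensity h) A := by
  set ν := μ.withDensity h with hν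
  have hac : ν ≪ μ := withDensity_absolutelyContinuous μ h
  rintro ⟨hAm, hA0, hAfin, hatom⟩
  set m := ν A with hm
  -- reduce to A' ⊆ A with μ A' < ∞ and ν A' = m
  obtain ⟨A', hA'sub, hA'm, hA'fin, hA'full⟩ :
      ∃ A', A' ⊆ A ∧ MeasurableSet A' ∧ μ A' < ⊤ ∧ ν A' = m := by
    have hU : A = ⋃ n, A ∩ spanningSets μ n := by
      rw [← Set.inter_iUnion, iUnion_spanningSets, Set.inter_univ]
    have hmono : Monotone fun n => A ∩ spanningSets μ n :=
      fun i j hij => Set.inter_subset_inter_right _ (monotone_spanningSets μ hij)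
    have hsup : ν A = ⨆ n, ν (A ∩ spanningSets μ n) := by
      conv_lhs => rw [hU]
      exact Directed.measure_iUnion hmono.directed_le
    have : ∃ n, ν (A ∩ spanningSets μ n) ≠ 0 := by
      by_contra hcon
      push_neg at hcon
      rw [← hm] at hsup
      have : m = 0 := by rw [hsup]; simp [hcon]
      exact hA0.ne' this
    obtain ⟨n, hn⟩ := this
    refine ⟨A ∩ spanningSets μ n, Set.inter_subset_left,
      hAm.inter (measurableSet_spanningSets μ n),
      lt_of_le_of_lt (measure_mono Set.inter_subset_right) (measure_spanningSets_lt_top μ n), ?_⟩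
    rcases hatom _ Set.inter_subset_left (hAm.inter (measurableSet_spanningSets μ n)) with h0 | h0
    · exact absurd h0 hn
    · exact h0
  -- the family of full-measure subsets of A' and the infimum of their μ-measures
  set P : Set (Set α) := {B | B ⊆ A' ∧ MeasurableSet B ∧ ν B = m} with hP
  set T : Set ℝ≥0∞ := (fun B => μ B) '' P with hT
  have hA'P : A' ∈ P := ⟨le_refl _, hA'm, hA'full⟩
  set c := sInf T with hc
  have hcfin : c < ⊤ := lt_of_le_of_lt (sInf_le ⟨A', hA'P, rfl⟩) hA'fin
  have hmfin : m < ⊤ := hAfin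
  have hm0 : m ≠ 0 := hA0.ne'
  -- choose minimizing sequence
  have hseq : ∀ n : ℕ, ∃ B ∈ P, μ B < c + (n : ℝ≥0∞)⁻¹ := by
    intro n
    have hlt : c < c + (n : ℝ≥0∞)⁻¹ := by
      apply ENNReal.lt_add_right hcfin.ne
      simp
    obtain ⟨x, hxT, hxlt⟩ := sInf_lt_iff.mp hlt
    obtain ⟨B, hBP, rfl⟩ := hxT
    exact ⟨B, hBP, hxlt⟩
  choose Bs hBsP hBslt using hseq
  set D := ⋂ n, Bs n with hD
  have hDsub : D ⊆ A' := (Set.iInter_subset _ 0).trans (hBsP 0).1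
  have hDm : MeasurableSet D := MeasurableSet.iInter fun n => (hBsP n).2.1
  have hDfull : ν D = m := by
    have hdiff : ∀ n, ν (A' \ Bs n) = 0 := by
      intro n
      rw [measure_diff (hBsP n).1 (hBsP n).2.1.nullMeasurableSet (by rw [(hBsP n).2.2]; exact hmfin.ne),
        (hBsP n).2.2, hA'full, tsub_self]
    have hcover : A' \ D ⊆ ⋃ n, A' \ Bs n := by
      intro x hx
      obtain ⟨hxA, hxD⟩ := hx
      rw [hD, Set.mem_iInter] at hxD
      push_neg at hxD
      obtain ⟨n, hn⟩ := hxD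
      exact Set.mem_iUnion.2 ⟨n, hxA, hn⟩
    have hnull : ν (A' \ D) = 0 :=
      le_antisymm ((measure_mono hcover).trans (measure_iUnion_null hdiff).le) zero_le
    have : ν A' ≤ ν D := by
      calc ν A' ≤ ν (D ∪ (A' \ D)) := measure_mono (fun x hx => by
            by_cases hxD : x ∈ D
            · exact Or.inl hxD
            · exact Or.inr ⟨hx, hxD⟩)
        _ ≤ ν D + ν (A' \ D) := measure_union_le _ _
        _ = ν D := by rw [hnull, add_zero]
    exact le_antisymm (by rw [← hA'full]; exact measure_mono hDsub) (hA'full ▸ this)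
  have hDP : D ∈ P := ⟨hDsub, hDm, hDfull⟩
  have hDlec : μ D ≤ c := by
    have hle : ∀ n : ℕ, μ D ≤ c + (n : ℝ≥0∞)⁻¹ :=
      fun n => (measure_mono (Set.iInter_subset _ n)).trans (hBslt n).le
    have hlim : Filter.Tendsto (fun n : ℕ => c + (n : ℝ≥0∞)⁻¹) Filter.atTop (nhds c) := by
      simpa using (ENNReal.tendsto_inv_nat_nhds_zero).const_add c
    exact ge_of_tendsto' hlim hle
  have hD0 : 0 < μ D := by
    rcases eq_or_lt_of_le (zero_le : 0 ≤ μ D) with h0 | h0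
    · exact absurd (hac (h0.symm)) (by rw [hDfull]; exact hm0)
    · exact h0
  have hDfin : μ D < ⊤ := lt_of_le_of_lt (measure_mono hDsub) hA'fin
  -- D is not a μ-atom
  have := hμ D
  rw [IsMeasureAtom] at this
  push_neg at this
  obtain ⟨B, hBsub, hBm, hB⟩ := this hDm hD0 hDfin
  obtain ⟨hB0, hBne⟩ := hB
  have hBltD : μ B < μ D := lt_of_le_of_ne (measure_mono hBsub) hBne
  have hBA : B ⊆ A := hBsub.trans (hDsub.trans hA'sub)
  rcases hatom B hBA hBm with hν0 | hνm
  · -- ν B = 0 : remove B from D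
    have hDBfull : ν (D \ B) = m := by
      have : ν D ≤ ν (D \ B) + ν B := by
        calc ν D ≤ ν ((D \ B) ∪ B) := measure_mono (fun x hx => by
              by_cases hxB : x ∈ B
              · exact Or.inr hxB
              · exact Or.inl ⟨hx, hxB⟩)
          _ ≤ ν (D \ B) + ν B := measure_union_le _ _
      rw [hν0, add_zero] at this
      exact le_antisymm ((measure_mono Set.diff_subset).trans hDfull.le) (hDfull ▸ this)
    have hmem : D \ B ∈ P := ⟨Set.diff_subset.trans hDsub, hDm.diff hBm, hDBfull⟩
    have hlt : μ (D \ B) < c := by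
      rw [measure_diff hBsub hBm.nullMeasurableSet (lt_of_le_of_lt (measure_mono hBsub) hDfin).ne]
      calc μ D - μ B < μ D := ENNReal.sub_lt_self hDfin.ne hD0.ne' hB0
        _ ≤ c := hDlec
    exact absurd (sInf_le (Set.mem_image_of_mem (fun B => μ B) hmem)) (not_le.mpr hlt)
  · -- ν B = m : B itself beats the infimum
    have hmem : B ∈ P := ⟨hBsub.trans hDsub, hBm, hνm⟩
    exact absurd (sInf_le (Set.mem_image_of_mem (fun B => μ B) hmem)) (not_le.mpr (lt_of_lt_of_le hBltD hDlec))

lemma exists_subset_measure_small {α : Type*} [MeasurableSpace α] {ν : Measure α}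
    (hν : ∀ A : Set α, ¬ IsMeasureAtom ν A) {S : Set α} (hS : MeasurableSet S)
    (h0 : 0 < ν S) (hfin : ν S < ⊤) {ε : ℝ≥0∞} (hε : 0 < ε) :
    ∃ B, B ⊆ S ∧ MeasurableSet B ∧ 0 < ν B ∧ ν B ≤ ε := by
  have halve : ∀ S : Set α, MeasurableSet S → 0 < ν S → ν S < ⊤ →
      ∃ B, B ⊆ S ∧ MeasurableSet B ∧ 0 < ν B ∧ ν B ≤ ν S * 2⁻¹ := by
    intro S hS h0 hfin
    have := hν S
    rw [IsMeasureAtom] at this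
    push_neg at this
    obtain ⟨B, hBsub, hBm, hB0, hBne⟩ := this hS h0 hfin
    have hBfin : ν B < ⊤ := lt_of_le_of_lt (measure_mono hBsub) hfin
    have hadd : ν B + ν (S \ B) = ν S := by
      have := measure_inter_add_diff (μ := ν) S hBm
      rwa [Set.inter_eq_right.mpr hBsub] at this
    rcases le_or_gt (ν B) (ν S * 2⁻¹) with hle | hlt
    · exact ⟨B, hBsub, hBm, pos_iff_ne_zero.mpr hB0, hle⟩
    · refine ⟨S \ B, Set.diff_subset, hS.diff hBm, ?_, ?_⟩
      · rw [pos_iff_ne_zero]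
        intro hz
        rw [hz, add_zero] at hadd
        exact hBne hadd
      · by_contra hcon
        push_neg at hcon
        have : ν S < ν B + ν (S \ B) := by
          calc ν S = ν S * 2⁻¹ + ν S * 2⁻¹ := by
                rw [← mul_add, ENNReal.inv_two_add_inv_two, mul_one]
            _ < ν B + ν (S \ B) := ENNReal.add_lt_add hlt hcon
        rw [hadd] at this
        exact absurd this (lt_irrefl _)
  have hiter : ∀ k : ℕ, ∃ B, B ⊆ S ∧ MeasurableSet B ∧ 0 < ν B ∧ ν B ≤ ν S * 2⁻¹ ^ k := by
    intro k
    induction k with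
    | zero => exact ⟨S, le_refl _, hS, h0, by simp⟩
    | succ k ih =>
      obtain ⟨B, hBsub, hBm, hB0, hBle⟩ := ih
      have hBfin : ν B < ⊤ := lt_of_le_of_lt (measure_mono hBsub) hfin
      obtain ⟨B', hB'sub, hB'm, hB'0, hB'le⟩ := halve B hBm hB0 hBfin
      refine ⟨B', hB'sub.trans hBsub, hB'm, hB'0, ?_⟩
      calc ν B' ≤ ν B * 2⁻¹ := hB'le
        _ ≤ ν S * 2⁻¹ ^ k * 2⁻¹ := mul_le_mul_left hBle _
        _ = ν S * 2⁻¹ ^ (k + 1) := by rw [mul_assoc, pow_succ]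
  rcases le_or_gt (ν S) ε with hle | hlt
  · exact ⟨S, le_refl _, hS, h0, hle⟩
  · obtain ⟨n, hn⟩ := ENNReal.exists_inv_two_pow_lt (a := ε / ν S)
      (by
        apply ne_of_gt
        exact ENNReal.div_pos hε.ne' hfin.ne)
    obtain ⟨B, hBsub, hBm, hB0, hBle⟩ := hiter n
    refine ⟨B, hBsub, hBm, hB0, hBle.trans ?_⟩
    calc ν S * 2⁻¹ ^ n ≤ ν S * (ε / ν S) := mul_le_mul_right hn.le _
      _ ≤ ε := ENNReal.mul_div_le

lemma sierpinski_half {α : Type*} [MeasurableSpace α] {ν : Measure α} [IsFiniteMeasure ν]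
    (hν : ∀ A : Set α, ¬ IsMeasureAtom ν A) {t : ℝ≥0∞} (ht : t ≤ ν Set.univ) :
    ∃ S : Set α, MeasurableSet S ∧ ν S = t := by
  classical
  have htfin : t < ⊤ := lt_of_le_of_lt ht (measure_lt_top ν _)
  -- the supremum of masses addable to A
  set s : Set α → ℝ≥0∞ := fun A => ⨆ (B : Set α) (_ : MeasurableSet B ∧ B ⊆ Aᶜ ∧ ν A + ν B ≤ t), ν B
    with hs
  have hstep : ∀ A : Set α, MeasurableSet A → ν A ≤ t →
      ∃ B, (MeasurableSet B ∧ B ⊆ Aᶜ ∧ ν A + ν B ≤ t) ∧ s A ≤ 2 * ν B := by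
    intro A hAm hAle
    rcases eq_or_lt_of_le (zero_le : 0 ≤ s A) with hz | hpos
    · exact ⟨∅, ⟨MeasurableSet.empty, Set.empty_subset _, by simpa using hAle⟩, by simp [← hz]⟩
    · have hsfin : s A ≤ t := by
        apply iSup₂_le
        intro B hB
        exact le_trans le_add_self hB.2.2
      have hhalf : s A / 2 < s A :=
        ENNReal.half_lt_self hpos.ne' (lt_of_le_of_lt hsfin htfin).ne
      by_contra hcon
      push_neg at hcon
      have : s A ≤ s A / 2 := by
        apply iSup₂_le
        intro B hB
        have h2 := hcon B hB
        -- 2 * ν B < s A  →  ν B ≤ s A / 2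
        rw [ENNReal.le_div_iff_mul_le (Or.inl (by norm_num)) (Or.inl (by norm_num))]
        rw [mul_comm]
        exact h2.le
      exact absurd this (not_le.mpr hhalf)
  -- the recursive construction
  have hstep' : ∀ A : Set α, ∃ B, (MeasurableSet A ∧ ν A ≤ t) →
      (MeasurableSet B ∧ B ⊆ Aᶜ ∧ ν A + ν B ≤ t) ∧ s A ≤ 2 * ν B := by
    intro A
    by_cases hA : MeasurableSet A ∧ ν A ≤ t
    · obtain ⟨B, hB⟩ := hstep A hA.1 hA.2
      exact ⟨B, fun _ => hB⟩
    · exact ⟨∅, fun h => absurd h hA⟩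
  choose pick hpick using hstep'
  set nxt : Set α → Set α := fun A => A ∪ pick A with hnext
  set Aseq : ℕ → Set α := fun n => nxt^[n] ∅ with hAseq
  have hAseq_succ : ∀ n, Aseq (n + 1) = Aseq n ∪ pick (Aseq n) := by
    intro n
    rw [hAseq]
    simp only [Function.iterate_succ', Function.comp_apply]
    rfl
  have hinv : ∀ n, MeasurableSet (Aseq n) ∧ ν (Aseq n) ≤ t := by
    intro n
    induction n with
    | zero =>
      have h0 : Aseq 0 = ∅ := rfl
      rw [h0]
      exact ⟨MeasurableSet.empty, by simp⟩
    | succ n ih =>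
      obtain ⟨⟨hBm, hBsub, hBle⟩, _⟩ := hpick (Aseq n) ih
      rw [hAseq_succ]
      constructor
      · exact ih.1.union hBm
      · rw [measure_union (Set.disjoint_left.mpr (fun x hxB hxA => (hBsub hxB) hxA)).symm hBm]
        exact hBle
  have hdisj : ∀ n, ν (Aseq (n + 1)) = ν (Aseq n) + ν (pick (Aseq n)) := by
    intro n
    obtain ⟨⟨hBm, hBsub, hBle⟩, _⟩ := hpick (Aseq n) (hinv n)
    rw [hAseq_succ]
    rw [measure_union (Set.disjoint_left.mpr (fun x hxB hxA => (hBsub hxB) hxA)).symm hBm]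
  have hmono : Monotone Aseq := by
    apply monotone_nat_of_le_succ
    intro n
    rw [hAseq_succ]
    exact Set.subset_union_left
  set A := ⋃ n, Aseq n with hA
  have hAm : MeasurableSet A := MeasurableSet.iUnion fun n => (hinv n).1
  have hAsup : ν A = ⨆ n, ν (Aseq n) := Directed.measure_iUnion hmono.directed_le
  have hAle : ν A ≤ t := by rw [hAsup]; exact iSup_le fun n => (hinv n).2
  refine ⟨A, hAm, ?_⟩
  by_contra hne
  have hlt : ν A < t := lt_of_le_of_ne hAle hne
  have hcomp : 0 < ν Aᶜ := by
    rw [pos_iff_ne_zero]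
    intro hz
    have := measure_add_measure_compl (μ := ν) hAm
    rw [hz, add_zero] at this
    exact absurd (this ▸ (lt_of_lt_of_le hlt ht)) (lt_irrefl _)
  obtain ⟨C, hCsub, hCm, hC0, hCle⟩ := exists_subset_measure_small hν hAm.compl hcomp
    (measure_lt_top ν _) (ε := t - ν A) (tsub_pos_of_lt hlt)
  -- at every stage, C was available
  have hCavail : ∀ n, ν C ≤ s (Aseq n) := by
    intro n
    have hmem : MeasurableSet C ∧ C ⊆ (Aseq n)ᶜ ∧ ν (Aseq n) + ν C ≤ t := by
      refine ⟨hCm, hCsub.trans (Set.compl_subset_compl.mpr (Set.subset_iUnion Aseq n)), ?_⟩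
      calc ν (Aseq n) + ν C ≤ ν A + (t - ν A) :=
            add_le_add (hAsup ▸ le_iSup (fun n => ν (Aseq n)) n) hCle
        _ = t := add_tsub_cancel_of_le hlt.le
    exact le_iSup₂_of_le C hmem (le_refl _)
  have hgrow : ∀ n : ℕ, (n : ℝ≥0∞) * (ν C / 2) ≤ ν (Aseq n) := by
    intro n
    induction n with
    | zero => simp
    | succ n ih =>
      have hpickC : ν C / 2 ≤ ν (pick (Aseq n)) := by
        obtain ⟨_, h2⟩ := hpick (Aseq n) (hinv n)
        rw [ENNReal.div_le_iff_le_mul (Or.inl (by norm_num)) (Or.inl (by norm_num))]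
        calc ν C ≤ s (Aseq n) := hCavail n
          _ ≤ 2 * ν (pick (Aseq n)) := h2
          _ = ν (pick (Aseq n)) * 2 := mul_comm _ _
      rw [hdisj n]
      push_cast
      calc ((n : ℝ≥0∞) + 1) * (ν C / 2) = (n : ℝ≥0∞) * (ν C / 2) + ν C / 2 := by ring
        _ ≤ ν (Aseq n) + ν (pick (Aseq n)) := add_le_add ih hpickC
  have hC2 : (0 : ℝ≥0∞) < ν C / 2 := ENNReal.div_pos hC0.ne' (by norm_num)
  obtain ⟨n, hn⟩ := ENNReal.exists_nat_gt (r := t / (ν C / 2))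
    (ENNReal.div_lt_top htfin.ne hC2.ne').ne
  have : t < (n : ℝ≥0∞) * (ν C / 2) := by
    rw [← ENNReal.div_lt_iff (Or.inl hC2.ne') (Or.inl (ENNReal.div_lt_top (measure_lt_top ν C).ne (by norm_num)).ne)]
    exact hn
  exact absurd ((this.trans_le (hgrow n)).trans_le ((hinv n).2)) (lt_irrefl _)

-- helper: lintegral over an atom where the function is a.e. constant
lemma setLIntegral_atom {α : Type*} [MeasurableSpace α] {μ : Measure α} {A : Set α}
    (hAm : MeasurableSet A) {q : α → ℂ} {d : ℂ}
    (hq : ∀ᵐ x ∂μ, x ∈ A → q x = d) :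
    ∫⁻ x in A, (‖q x‖₊ : ℝ≥0∞) ∂μ = (‖d‖₊ : ℝ≥0∞) * μ A := by
  have : ∫⁻ x in A, (‖q x‖₊ : ℝ≥0∞) ∂μ = ∫⁻ _ in A, (‖d‖₊ : ℝ≥0∞) ∂μ := by
    apply lintegral_congr_ae
    apply (ae_restrict_iff' hAm).mpr
    filter_upwards [hq] with x hx hxA
    rw [hx hxA]
  rw [this, setLIntegral_const]

/-- For a nonzero σ-finite measure `μ`, the norm equation
`‖f + g‖₁ = ‖f - g‖₁ = ‖f‖₁ = ‖g‖₁` is solvable for every `f ∈ L¹(μ)`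
if and only if `μ` is atomless. -/
theorem norm_equation_solvable_iff_atomless {α : Type*} [MeasurableSpace α]
    (μ : Measure α) [SigmaFinite μ] (hμ : μ ≠ 0) :
    (∀ f : Lp ℂ 1 μ, ∃ g : Lp ℂ 1 μ, ‖f + g‖ = ‖f‖ ∧ ‖f - g‖ = ‖f‖ ∧ ‖g‖ = ‖f‖) ↔
      (∀ A : Set α, ¬ IsMeasureAtom μ A) := by
  constructor
  · -- solvability ⇒ atomless
    intro hsolv A hA
    obtain ⟨hAm, hA0, hAfin, hatom⟩ := hA
    set F₀ : α → ℂ := A.indicator (fun _ => (1 : ℂ)) with hF₀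
    have hF₀m : Measurable F₀ := measurable_const.indicator hAm
    have hF₀nn : (fun x => (‖F₀ x‖₊ : ℝ≥0∞)) = A.indicator (fun _ => (1 : ℝ≥0∞)) := by
      funext x
      by_cases hx : x ∈ A <;> simp [hF₀, Set.indicator_of_mem, Set.indicator_of_notMem, hx]
    have hF₀int : ∫⁻ x, (‖F₀ x‖₊ : ℝ≥0∞) ∂μ = μ A := by
      rw [hF₀nn, lintegral_indicator hAm, setLIntegral_one]
    have hF₀mem : MemLp F₀ 1 μ := by
      refine ⟨hF₀m.aestronglyMeasurable, ?_⟩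
      rw [eLpNorm_one_eq_lintegral_nnnorm_C, hF₀int]
      exact hAfin
    set f : Lp ℂ 1 μ := hF₀mem.toLp F₀ with hf
    obtain ⟨g, h₁, h₂, h₃⟩ := hsolv f
    -- measurable representative of g
    set G : α → ℂ := (Lp.aestronglyMeasurable g).mk g with hG
    have hGm : Measurable G := (Lp.aestronglyMeasurable g).stronglyMeasurable_mk.measurable
    have hGae : ⇑g =ᵐ[μ] G := (Lp.aestronglyMeasurable g).ae_eq_mk
    obtain ⟨c, hc⟩ := IsMeasureAtom.ae_const ⟨hAm, hA0, hAfin, hatom⟩ hGm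
    set m := μ A with hm
    set r := ∫⁻ x in Aᶜ, (‖G x‖₊ : ℝ≥0∞) ∂μ with hr
    have hrfin : r ≠ ⊤ := by
      have : r ≤ ∫⁻ x, (‖G x‖₊ : ℝ≥0∞) ∂μ := setLIntegral_le_lintegral _ _
      have h2 : ∫⁻ x, (‖G x‖₊ : ℝ≥0∞) ∂μ = eLpNorm (⇑g) 1 μ := by
        rw [eLpNorm_one_eq_lintegral_enorm]
        exact (lintegral_congr_ae (hGae.fun_comp fun z => (‖z‖₊ : ℝ≥0∞))).symm
      exact (lt_of_le_of_lt this (h2 ▸ (Lp.eLpNorm_ne_top g).lt_top)).ne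
    -- the three lintegral computations
    have hAc : ∀ (q : α → ℂ), (∀ x ∈ Aᶜ, (‖q x‖₊ : ℝ≥0∞) = ‖G x‖₊) →
        ∫⁻ x in Aᶜ, (‖q x‖₊ : ℝ≥0∞) ∂μ = r := by
      intro q hlocal
      exact setLIntegral_congr_fun hAm.compl hlocal
    have hcomp : ∀ (q : α → ℂ) (d : ℂ), (∀ᵐ x ∂μ, x ∈ A → q x = d) →
        (∀ x ∈ Aᶜ, (‖q x‖₊ : ℝ≥0∞) = ‖G x‖₊) →
        ∫⁻ x, (‖q x‖₊ : ℝ≥0∞) ∂μ = (‖d‖₊ : ℝ≥0∞) * m + r := by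
      intro q d hd hlocal
      rw [← lintegral_add_compl (fun x => (‖q x‖₊ : ℝ≥0∞)) hAm,
        setLIntegral_atom hAm hd, hAc q hlocal]
    -- translate the norm equalities
    have hnormf : ‖f‖ = m.toReal := by
      rw [hf, Lp.norm_toLp F₀ hF₀mem, eLpNorm_one_eq_lintegral_nnnorm_C, hF₀int]
    have hfF₀ : ⇑f =ᵐ[μ] F₀ := hF₀mem.coeFn_toLp
    have key : ∀ (h : Lp ℂ 1 μ) (q : α → ℂ) (d : ℂ), (⇑h =ᵐ[μ] q) →
        (∀ᵐ x ∂μ, x ∈ A → q x = d) → (∀ x ∈ Aᶜ, (‖q x‖₊ : ℝ≥0∞) = ‖G x‖₊) →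
        ‖h‖ = m.toReal → (‖d‖₊ : ℝ≥0∞) * m + r = m := by
      intro h q d hhq hd hlocal hnorm
      have h1 : eLpNorm (⇑h) 1 μ = (‖d‖₊ : ℝ≥0∞) * m + r := by
        rw [eLpNorm_congr_ae hhq, eLpNorm_one_eq_lintegral_nnnorm_C, hcomp q d hd hlocal]
      have h2 : ((‖d‖₊ : ℝ≥0∞) * m + r).toReal = m.toReal := by
        rw [← h1, ← Lp.norm_def, hnorm]
      have hfin1 : (‖d‖₊ : ℝ≥0∞) * m + r ≠ ⊤ := h1 ▸ Lp.eLpNorm_ne_top h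
      exact (ENNReal.toReal_eq_toReal_iff' hfin1 hAfin.ne).mp h2
    -- a.e. facts on A
    have hload : ∀ᵐ x ∂μ, x ∈ A → F₀ x = 1 := by
      filter_upwards with x hx
      simp [hF₀, Set.indicator_of_mem hx]
    have hfg_add : ⇑(f + g) =ᵐ[μ] fun x => F₀ x + G x := by
      filter_upwards [Lp.coeFn_add f g, hfF₀, hGae] with x h1 h2 h3
      rw [h1]; simp [h2, h3]
    have hfg_sub : ⇑(f - g) =ᵐ[μ] fun x => F₀ x - G x := by
      filter_upwards [Lp.coeFn_sub f g, hfF₀, hGae] with x h1 h2 h3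
      rw [h1]; simp [h2, h3]
    have E₁ : (‖(1 : ℂ) + c‖₊ : ℝ≥0∞) * m + r = m := by
      refine key (f + g) (fun x => F₀ x + G x) (1 + c) hfg_add ?_ ?_ (by rw [h₁, hnormf])
      · filter_upwards [hload, hc] with x h1 h2 hx; rw [h1 hx, h2 hx]
      · intro x hx
        simp [hF₀, Set.indicator_of_notMem (Set.notMem_of_mem_compl hx)]
    have E₂ : (‖(1 : ℂ) - c‖₊ : ℝ≥0∞) * m + r = m := by
      refine key (f - g) (fun x => F₀ x - G x) (1 - c) hfg_sub ?_ ?_ (by rw [h₂, hnormf])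
      · filter_upwards [hload, hc] with x h1 h2 hx; rw [h1 hx, h2 hx]
      · intro x hx
        simp [hF₀, Set.indicator_of_notMem (Set.notMem_of_mem_compl hx)]
    have E₃ : (‖c‖₊ : ℝ≥0∞) * m + r = m := by
      refine key g G c hGae hc (fun x _ => rfl) (by rw [h₃, hnormf])
    -- cancel r and m
    have cancel : ∀ d d' : ℂ, (‖d‖₊ : ℝ≥0∞) * m + r = m → (‖d'‖₊ : ℝ≥0∞) * m + r = m →
        ‖d‖ = ‖d'‖ := by
      intro d d' hd hd'
      have h1 : (‖d‖₊ : ℝ≥0∞) * m + r = (‖d'‖₊ : ℝ≥0∞) * m + r := by rw [hd, hd']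
      rw [add_comm _ r, add_comm _ r] at h1
      have h2 := (ENNReal.add_right_inj hrfin).mp h1
      have h3 := (ENNReal.mul_left_inj hA0.ne' hAfin.ne).mp h2
      have h4 : ‖d‖₊ = ‖d'‖₊ := by exact_mod_cast h3
      exact congrArg NNReal.toReal h4
    have e₁ : ‖(1 : ℂ) + c‖ = ‖c‖ := cancel _ _ E₁ E₃
    have e₂ : ‖(1 : ℂ) - c‖ = ‖c‖ := cancel _ _ E₂ E₃
    have hpar := parallelogram_law_with_norm ℂ (1 : ℂ) c
    rw [e₁, e₂, norm_one] at hpar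
    nlinarith [sq_nonneg ‖c‖]
  · -- atomless ⇒ solvability
    intro hatomless f
    by_cases hf : f = 0
    · exact ⟨0, by simp [hf]⟩
    -- measurable representative
    set F : α → ℂ := (Lp.aestronglyMeasurable f).mk f with hF
    have hFm : Measurable F := (Lp.aestronglyMeasurable f).stronglyMeasurable_mk.measurable
    have hFae : ⇑f =ᵐ[μ] F := (Lp.aestronglyMeasurable f).ae_eq_mk
    set h : α → ℝ≥0∞ := fun x => (‖F x‖₊ : ℝ≥0∞) with hh
    have hhm : Measurable h := hFm.nnnorm.coe_nnreal_ennreal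
    set T := ∫⁻ x, h x ∂μ with hT
    have hTsnorm : eLpNorm (⇑f) 1 μ = T := by
      rw [eLpNorm_one_eq_lintegral_enorm]
      exact lintegral_congr_ae (hFae.fun_comp fun z => (‖z‖₊ : ℝ≥0∞))
    have hTfin : T ≠ ⊤ := hTsnorm ▸ Lp.eLpNorm_ne_top f
    have hT0 : T ≠ 0 := by
      intro h0
      apply hf
      have : ‖f‖ = 0 := by rw [Lp.norm_def, hTsnorm, h0, ENNReal.toReal_zero]
      exact norm_eq_zero.mp this
    -- the weighted measure and Sierpiński
    set ν := μ.withDensity h with hν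
    have hνuniv : ν Set.univ = T := by
      rw [hν, withDensity_apply h MeasurableSet.univ, Measure.restrict_univ]
    haveI : IsFiniteMeasure ν := ⟨by rw [hνuniv]; exact hTfin.lt_top⟩
    have hνatomless := noAtoms_withDensity hatomless hhm
    obtain ⟨S, hSm, hSν⟩ := sierpinski_half hνatomless
      (t := T / 2) (by rw [hνuniv]; exact ENNReal.half_le_self)
    have hS1 : ∫⁻ x in S, h x ∂μ = T / 2 := by
      rw [← withDensity_apply h hSm]
      exact hSν
    have hS2 : ∫⁻ x in Sᶜ, h x ∂μ = T / 2 := by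
      have := lintegral_add_compl h hSm (μ := μ)
      rw [hS1, ← hT] at this
      have h2 : T / 2 + ∫⁻ x in Sᶜ, h x ∂μ = T / 2 + T / 2 := by
        rw [this, ENNReal.add_halves]
      have hhalf : T / 2 ≠ ⊤ := by
        simp only [ENNReal.div_eq_inv_mul]
        exact ENNReal.mul_ne_top (by norm_num) hTfin
      exact (ENNReal.add_right_inj hhalf).mp h2
    -- the flipped function
    classical
    set G : α → ℂ := fun x => if x ∈ S then F x else -F x with hG
    have hGm : Measurable G := Measurable.ite hSm hFm hFm.neg
    have hGnn : ∀ x, (‖G x‖₊ : ℝ≥0∞) = h x := by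
      intro x
      by_cases hx : x ∈ S <;> simp [hG, hx, hh]
    have hGmem : MemLp G 1 μ := by
      refine ⟨hGm.aestronglyMeasurable, ?_⟩
      rw [eLpNorm_one_eq_lintegral_nnnorm_C]
      have : ∫⁻ x, (‖G x‖₊ : ℝ≥0∞) ∂μ = T := by
        rw [hT]; exact lintegral_congr fun x => hGnn x
      rw [this]; exact hTfin.lt_top
    set g : Lp ℂ 1 μ := hGmem.toLp G with hg
    have hGae : ⇑g =ᵐ[μ] G := hGmem.coeFn_toLp
    have hnormf : ‖f‖ = T.toReal := by rw [Lp.norm_def, hTsnorm]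
    refine ⟨g, ?_, ?_, ?_⟩
    · -- ‖f + g‖ = ‖f‖
      have hadd : ⇑(f + g) =ᵐ[μ] fun x => F x + G x := by
        filter_upwards [Lp.coeFn_add f g, hFae, hGae] with x h1 h2 h3
        rw [h1]; simp [h2, h3]
      have hnn : (fun x => (‖F x + G x‖₊ : ℝ≥0∞)) = S.indicator (fun x => 2 * h x) := by
        funext x
        by_cases hx : x ∈ S
        · rw [Set.indicator_of_mem hx]
          have h1 : F x + G x = (2 : ℂ) * F x := by rw [hG]; simp [hx]; ring
          rw [h1, hh]
          simp [nnnorm_mul]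
        · rw [Set.indicator_of_notMem hx]
          have : F x + G x = 0 := by rw [hG]; simp [hx]
          simp [this]
      rw [Lp.norm_def, eLpNorm_congr_ae hadd, eLpNorm_one_eq_lintegral_nnnorm_C, hnn,
        lintegral_indicator hSm, lintegral_const_mul 2 hhm, hS1,
        ENNReal.mul_div_cancel' (by norm_num) (by norm_num), hnormf]
    · -- ‖f - g‖ = ‖f‖
      have hsub : ⇑(f - g) =ᵐ[μ] fun x => F x - G x := by
        filter_upwards [Lp.coeFn_sub f g, hFae, hGae] with x h1 h2 h3
        rw [h1]; simp [h2, h3]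
      have hnn : (fun x => (‖F x - G x‖₊ : ℝ≥0∞)) = Sᶜ.indicator (fun x => 2 * h x) := by
        funext x
        by_cases hx : x ∈ S
        · rw [Set.indicator_of_notMem (by simpa using hx)]
          have : F x - G x = 0 := by rw [hG]; simp [hx]
          simp [this]
        · rw [Set.indicator_of_mem (by simpa using hx)]
          have h1 : F x - G x = (2 : ℂ) * F x := by rw [hG]; simp [hx]; ring
          rw [h1, hh]
          simp [nnnorm_mul]
      rw [Lp.norm_def, eLpNorm_congr_ae hsub, eLpNorm_one_eq_lintegral_nnnorm_C, hnn,
        lintegral_indicator hSm.compl, lintegral_const_mul 2 hhm, hS2,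
        ENNReal.mul_div_cancel' (by norm_num) (by norm_num), hnormf]
    · -- ‖g‖ = ‖f‖
      rw [Lp.norm_def, eLpNorm_congr_ae hGae, eLpNorm_one_eq_lintegral_enorm, hnormf]
      congr 1
      rw [hT]
      exact lintegral_congr fun x => hGnn x
end

section
/- Let μ be a σ-finite measure, and let f, g ∈ L¹(μ) with f ≠ 0 satisfy ‖f + g‖₁ = ‖f − g‖₁ = ‖f‖₁ = ‖g‖₁. Then there exists a measurable set E contained in the support S := {x : f(x) ≠ 0} such that ∫_E |f| dμ = ‖f‖₁ / 2 and g = f·(1_E − 1_{S∖E}) almost everywhere (in particular g vanishes a.e. where f vanishes). -/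
open MeasureTheory

private lemma norm_sum_lower (a b : ℂ) :
    2 * ‖a‖ ≤ ‖a + b‖ + ‖a - b‖ ∧ 2 * ‖b‖ ≤ ‖a + b‖ + ‖a - b‖ := by
  constructor
  · have h := norm_add_le (a + b) (a - b)
    have e : (a + b) + (a - b) = 2 * a := by ring
    rw [e, norm_mul] at h
    simpa using h
  · have h := norm_sub_le (a + b) (a - b)
    have e : (a + b) - (a - b) = 2 * b := by ring
    rw [e, norm_mul] at h
    simpa using h

private lemma norm_add_sub_nonneg (a b : ℂ) :
    ‖a‖ + ‖b‖ ≤ ‖a + b‖ + ‖a - b‖ := by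
  obtain ⟨h1, h2⟩ := norm_sum_lower a b
  linarith

private lemma key_ptwise (a b : ℂ) (h : ‖a + b‖ + ‖a - b‖ = ‖a‖ + ‖b‖) :
    b = a ∨ b = -a := by
  obtain ⟨hl1, hl2⟩ := norm_sum_lower a b
  have hab : ‖a‖ = ‖b‖ := by linarith
  have hsum : ‖(a + b) + (a - b)‖ = ‖a + b‖ + ‖a - b‖ := by
    have e : (a + b) + (a - b) = 2 * a := by ring
    rw [e, norm_mul, h]
    simp [hab]
    linarith
  have hsr : SameRay ℝ (a + b) (a - b) := sameRay_iff_norm_add.mpr hsum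
  rcases hsr with h0 | h0 | ⟨r₁, r₂, hr₁, hr₂, hr⟩
  · right; linear_combination h0
  · left; linear_combination -h0
  · rw [Complex.real_smul, Complex.real_smul] at hr
    have hb : ((r₁ + r₂ : ℝ) : ℂ) * b = ((r₂ - r₁ : ℝ) : ℂ) * a := by
      push_cast
      linear_combination hr
    have hn := congrArg norm hb
    rw [norm_mul, norm_mul, Complex.norm_real, Complex.norm_real, hab,
      Real.norm_eq_abs, Real.norm_eq_abs, abs_of_pos (show (0:ℝ) < r₁ + r₂ by linarith)] at hn
    have habs2 : |r₂ - r₁| < r₁ + r₂ := abs_sub_lt_iff.mpr ⟨by linarith, by linarith⟩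
    have hb0 : ‖b‖ = 0 := by
      have hz : (r₁ + r₂ - |r₂ - r₁|) * ‖b‖ = 0 := by linear_combination hn
      rcases mul_eq_zero.mp hz with h | h
      · linarith
      · exact h
    have hbz : b = 0 := norm_eq_zero.mp hb0
    have haz : a = 0 := norm_eq_zero.mp (by rw [hab]; exact hb0)
    left; rw [hbz, haz]

/-- If `f, g ∈ L¹(μ)` with `f ≠ 0` satisfy `‖f + g‖₁ = ‖f − g‖₁ = ‖f‖₁ = ‖g‖₁`
(with `μ` σ-finite), then there is a measurable set `E` contained in the support
`S = {x | f x ≠ 0}` such that `∫_E |f| dμ = ‖f‖₁ / 2` and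
`g = f·(1_E − 1_{S \ E})` almost everywhere. -/
theorem solutions_of_norm_equation {α : Type*} [MeasurableSpace α] (μ : Measure α)
    [SigmaFinite μ] (f g : α → ℂ) (hf : Integrable f μ) (hg : Integrable g μ)
    (hf0 : ¬ f =ᵐ[μ] 0)
    (h1 : ∫ x, ‖f x + g x‖ ∂μ = ∫ x, ‖f x‖ ∂μ)
    (h2 : ∫ x, ‖f x - g x‖ ∂μ = ∫ x, ‖f x‖ ∂μ)
    (h3 : ∫ x, ‖g x‖ ∂μ = ∫ x, ‖f x‖ ∂μ) :
    ∃ E : Set α, MeasurableSet E ∧ E ⊆ {x | f x ≠ 0} ∧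
      (∫ x in E, ‖f x‖ ∂μ = (∫ x, ‖f x‖ ∂μ) / 2) ∧
      g =ᵐ[μ] fun x =>
        f x * (E.indicator (fun _ => (1 : ℂ)) x -
          ({x | f x ≠ 0} \ E).indicator (fun _ => (1 : ℂ)) x) := by
  have hI1 : Integrable (fun x => ‖f x + g x‖) μ := (hf.add hg).norm
  have hI2 : Integrable (fun x => ‖f x - g x‖) μ := (hf.sub hg).norm
  have hIf : Integrable (fun x => ‖f x‖) μ := hf.norm
  have hIg : Integrable (fun x => ‖g x‖) μ := hg.norm
  set D : α → ℝ := fun x => ‖f x + g x‖ + ‖f x - g x‖ - (‖f x‖ + ‖g x‖) with hD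
  have hDnn : (0 : α → ℝ) ≤ D := fun x => by
    have := norm_add_sub_nonneg (f x) (g x)
    simp only [hD, Pi.zero_apply]
    linarith
  have hDint : Integrable D μ := ((hI1.add hI2).sub (hIf.add hIg))
  have hDzero : ∫ x, D x ∂μ = 0 := by
    simp only [hD]
    have hIsum : Integrable (fun x => ‖f x + g x‖ + ‖f x - g x‖) μ := hI1.add hI2
    have hIsum2 : Integrable (fun x => ‖f x‖ + ‖g x‖) μ := hIf.add hIg
    rw [integral_sub hIsum hIsum2, integral_add hI1 hI2,
      integral_add hIf hIg, h1, h2, h3]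
    ring
  have hDae : D =ᵐ[μ] 0 := (integral_eq_zero_iff_of_nonneg hDnn hDint).mp hDzero
  have haee : ∀ᵐ x ∂μ, g x = f x ∨ g x = -f x := by
    filter_upwards [hDae] with x hx
    exact key_ptwise (f x) (g x) (by simp only [hD, Pi.zero_apply] at hx; linarith)
  -- measurable representatives
  set f' := hf.1.mk f with hf'def
  set g' := hg.1.mk g with hg'def
  have hff' : f =ᵐ[μ] f' := hf.1.ae_eq_mk
  have hgg' : g =ᵐ[μ] g' := hg.1.ae_eq_mk
  obtain ⟨N, hNsub, hNm, hNz⟩ := exists_measurable_superset_of_null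
    (show μ ({x | ¬ f x = f' x} ∪ {x | ¬ g x = g' x}) = 0 from
      measure_union_null (ae_iff.mp hff') (ae_iff.mp hgg'))
  set E : Set α := ({x | g' x = f' x} ∩ {x | f' x ≠ 0}) ∩ Nᶜ with hEdef
  have hf'meas : Measurable f' := hf.1.stronglyMeasurable_mk.measurable
  have hg'meas : Measurable g' := hg.1.stronglyMeasurable_mk.measurable
  have hEm : MeasurableSet E := by
    apply MeasurableSet.inter _ hNm.compl
    apply MeasurableSet.inter
    · exact measurableSet_eq_fun hg'meas hf'meas
    · exact (hf'meas (measurableSet_singleton (0:ℂ))).compl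
  have hfN : ∀ x, x ∉ N → f x = f' x := fun x hx => by
    by_contra h; exact hx (hNsub (Or.inl h))
  have hgN : ∀ x, x ∉ N → g x = g' x := fun x hx => by
    by_contra h; exact hx (hNsub (Or.inr h))
  have hNae : ∀ᵐ x ∂μ, x ∉ N := measure_eq_zero_iff_ae_notMem.mp hNz
  have hEsub : E ⊆ {x | f x ≠ 0} := by
    rintro x ⟨⟨hgf, hf0'⟩, hxN⟩
    have := hfN x hxN
    simpa [this] using hf0'
  refine ⟨E, hEm, hEsub, ?_, ?_⟩
  · -- integral over E
    have hind : (fun x => ‖f x + g x‖) =ᵐ[μ] E.indicator (fun x => 2 * ‖f x‖) := by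
      filter_upwards [haee, hNae] with x hor hxN
      have hfx := hfN x hxN
      have hgx := hgN x hxN
      by_cases hxE : x ∈ E
      · obtain ⟨⟨hgf, hf0'⟩, -⟩ := id hxE
        rw [Set.indicator_of_mem hxE]
        have : g x = f x := by rw [hgx, hfx, hgf]
        rw [this]
        have : f x + f x = 2 * f x := by ring
        rw [this, norm_mul]
        simp
      · rw [Set.indicator_of_notMem hxE]
        by_cases hfz : f' x = 0
        · have hfz' : f x = 0 := by rw [hfx, hfz]
          rcases hor with h | h <;> simp [h, hfz']
        · have hne : g' x ≠ f' x := by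
            intro h
            exact hxE ⟨⟨h, hfz⟩, hxN⟩
          have : g x ≠ f x := by rw [hgx, hfx]; exact hne
          rcases hor with h | h
          · exact absurd h this
          · simp [h]
    have hcalc : ∫ x, ‖f x + g x‖ ∂μ = 2 * ∫ x in E, ‖f x‖ ∂μ := by
      rw [integral_congr_ae hind, integral_indicator hEm, integral_const_mul]
    rw [hcalc] at h1
    linarith
  · -- the a.e. identity
    filter_upwards [haee, hNae] with x hor hxN
    have hfx := hfN x hxN
    have hgx := hgN x hxN
    by_cases hxE : x ∈ E
    · obtain ⟨⟨hgf, hf0'⟩, -⟩ := id hxE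
      have hnot : x ∉ {x | f x ≠ 0} \ E := fun h => h.2 hxE
      rw [Set.indicator_of_mem hxE, Set.indicator_of_notMem hnot]
      have : g x = f x := by rw [hgx, hfx, hgf]
      rw [this]; ring
    · rw [Set.indicator_of_notMem hxE]
      by_cases hfz : f x = 0
      · have hnot : x ∉ {x | f x ≠ 0} \ E := fun h => h.1 hfz
        rw [Set.indicator_of_notMem hnot]
        rcases hor with h | h <;> simp [h, hfz]
      · have hmem : x ∈ {x | f x ≠ 0} \ E := ⟨hfz, hxE⟩
        rw [Set.indicator_of_mem hmem]
        have hfz' : f' x ≠ 0 := by rw [← hfx]; exact hfz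
        have hne : g' x ≠ f' x := by
          intro h
          exact hxE ⟨⟨h, hfz'⟩, hxN⟩
        have : g x ≠ f x := by rw [hgx, hfx]; exact hne
        rcases hor with h | h
        · exact absurd h this
        · rw [h]; ring
end

section
/- Let μ be a σ-finite atomless measure and let f ∈ L¹(μ) with ‖f‖₁ = 1. Then there exists a map γ from [0,2] to L¹(μ) such that γ(0) = f, γ(2) = −f, ‖γ(t)‖₁ = 1 for all t ∈ [0,2], and ‖γ(s) − γ(t)‖₁ = |s − t| for all s, t ∈ [0,2]. (That is, f and −f are joined by a girth curve: a curve lying on the unit sphere of L¹(μ) of length 2.) -/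
open MeasureTheory

open Set ENNReal Filter

namespace GirthAux

variable {α : Type*} [MeasurableSpace α] {ν : Measure α} [IsFiniteMeasure ν]

/-- Nonatomicity in the splitting sense. -/
def NA (ν : Measure α) : Prop := ∀ A, MeasurableSet A → ν A ≠ 0 →
  ∃ B, B ⊆ A ∧ MeasurableSet B ∧ ν B ≠ 0 ∧ ν B ≠ ν A

lemma exists_small (hna : NA ν) (n : ℕ) :
    ∀ A, MeasurableSet A → ν A ≠ 0 →
      ∃ B, B ⊆ A ∧ MeasurableSet B ∧ ν B ≠ 0 ∧ ν B ≤ ν A / 2 ^ n := by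
  induction n with
  | zero => exact fun A hA h0 => ⟨A, subset_rfl, hA, h0, by simp⟩
  | succ n ih =>
    intro A hA h0
    obtain ⟨B, hBA, hB, hB0, hBle⟩ := ih A hA h0
    obtain ⟨C, hCB, hC, hC0, hCne⟩ := hna B hB hB0
    have hdiff : ν (B \ C) = ν B - ν C :=
      measure_diff hCB hC.nullMeasurableSet (measure_ne_top ν C)
    have hhalf : ν B / 2 ≤ ν A / 2 ^ (n + 1) := by
      have e : ν A / 2 ^ n / 2 = ν A / 2 ^ (n + 1) := by
        rw [div_eq_mul_inv, div_eq_mul_inv, div_eq_mul_inv, mul_assoc,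
          ← ENNReal.mul_inv (by simp) (by simp), pow_succ]
      rw [← e]
      exact ENNReal.div_le_div_right hBle 2
    rcases le_total (ν C) (ν B / 2) with h | h
    · exact ⟨C, hCB.trans hBA, hC, hC0, h.trans hhalf⟩
    · refine ⟨B \ C, diff_subset.trans hBA, hB.diff hC, ?_, ?_⟩
      · rw [hdiff]
        have hlt : ν C < ν B := lt_of_le_of_ne (measure_mono hCB) hCne
        exact (tsub_pos_of_lt hlt).ne'
      · rw [hdiff]
        calc ν B - ν C ≤ ν B - ν B / 2 := tsub_le_tsub_left h _
          _ = ν B / 2 := ENNReal.sub_half (measure_ne_top ν B)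
          _ ≤ ν A / 2 ^ (n + 1) := hhalf

lemma exists_le (hna : NA ν) {A : Set α} {ε : ℝ≥0∞} (hA : MeasurableSet A)
    (h0 : ν A ≠ 0) (hε : ε ≠ 0) :
    ∃ B, B ⊆ A ∧ MeasurableSet B ∧ ν B ≠ 0 ∧ ν B ≤ ε := by
  rcases eq_or_ne ε ⊤ with rfl | hεt
  · obtain ⟨B, h1, h2, h3, _⟩ := exists_small hna 0 A hA h0
    exact ⟨B, h1, h2, h3, le_top⟩
  · have hfin : ν A / ε ≠ ⊤ := by
      simp [ENNReal.div_eq_top, hε, measure_ne_top ν A]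
    obtain ⟨n, hn⟩ := ENNReal.exists_nat_gt hfin
    have hn2 : ν A / ε < 2 ^ n := by
      refine hn.trans_le ?_
      exact_mod_cast Nat.le_of_lt (Nat.lt_two_pow_self (n := n))
    have hle : ν A / 2 ^ n ≤ ε := by
      rw [ENNReal.div_lt_iff (Or.inl hε) (Or.inl hεt)] at hn2
      rw [ENNReal.div_le_iff (by positivity) (by simp)]
      rw [mul_comm] at hn2
      exact hn2.le
    obtain ⟨B, h1, h2, h3, h4⟩ := exists_small hna n A hA h0
    exact ⟨B, h1, h2, h3, h4.trans hle⟩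

lemma exists_exact (hna : NA ν) {A : Set α} {r : ℝ≥0∞} (hA : MeasurableSet A)
    (hr : r ≤ ν A) : ∃ B, B ⊆ A ∧ MeasurableSet B ∧ ν B = r := by
  classical
  set Q : Set α → Prop := fun S => S ⊆ A ∧ MeasurableSet S ∧ ν S ≤ r with hQ
  have hrt : r ≠ ⊤ := fun h => (measure_ne_top ν A) (top_le_iff.mp (h ▸ hr))
  -- greedy step
  have step : ∀ S, Q S → ∃ B, B ⊆ A \ S ∧ MeasurableSet B ∧ ν S + ν B ≤ r ∧
      ∀ C, C ⊆ A \ S → MeasurableSet C → ν S + ν C ≤ r → ν C ≤ 2 * ν B := by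
    intro S hS
    set d : ℝ≥0∞ := ⨆ (C : Set α) (_ : C ⊆ A \ S ∧ MeasurableSet C ∧ ν S + ν C ≤ r), ν C with hd
    have hdle : ∀ C, C ⊆ A \ S → MeasurableSet C → ν S + ν C ≤ r → ν C ≤ d := by
      intro C h1 h2 h3
      exact le_iSup₂ (f := fun (C : Set α)
        (_ : C ⊆ A \ S ∧ MeasurableSet C ∧ ν S + ν C ≤ r) => ν C) C ⟨h1, h2, h3⟩
    rcases eq_or_ne d 0 with hd0 | hd0
    · refine ⟨∅, empty_subset _, MeasurableSet.empty, by simpa using hS.2.2, ?_⟩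
      intro C h1 h2 h3
      simpa [hd0] using hdle C h1 h2 h3
    · have hdt : d ≠ ⊤ := by
        refine ne_top_of_le_ne_top (measure_ne_top ν univ) ?_
        exact iSup₂_le fun C _ => measure_mono (subset_univ C)
      obtain ⟨C, hCd⟩ := lt_iSup_iff.mp (ENNReal.half_lt_self hd0 hdt)
      obtain ⟨hC, hgt⟩ := lt_iSup_iff.mp hCd
      refine ⟨C, hC.1, hC.2.1, hC.2.2, ?_⟩
      intro C' h1 h2 h3
      refine (hdle C' h1 h2 h3).trans ?_
      have : d / 2 ≤ ν C := hgt.le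
      rw [ENNReal.div_le_iff_le_mul (Or.inl two_ne_zero) (Or.inl ENNReal.ofNat_ne_top)] at this
      rw [mul_comm] at this
      exact this
  choose pick hpick₁ hpick₂ hpick₃ hpick₄ using step
  -- the increasing sequence
  have hQ0 : Q ∅ := ⟨empty_subset _, MeasurableSet.empty, by simp⟩
  have hQstep : ∀ (S) (hS : Q S), Q (S ∪ pick S hS) := by
    intro S hS
    refine ⟨union_subset hS.1 ((hpick₁ S hS).trans diff_subset), hS.2.1.union (hpick₂ S hS), ?_⟩
    exact (measure_union_le _ _).trans (hpick₃ S hS)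
  let Sseq : ℕ → {S : Set α // Q S} := fun n =>
    Nat.rec ⟨∅, hQ0⟩ (fun _ p => ⟨p.1 ∪ pick p.1 p.2, hQstep p.1 p.2⟩) n
  have hsucc : ∀ n, (Sseq (n + 1)).1 = (Sseq n).1 ∪ pick (Sseq n).1 (Sseq n).2 := fun n => rfl
  have hmono : Monotone fun n => (Sseq n).1 := by
    refine monotone_nat_of_le_succ fun n => ?_
    rw [hsucc]; exact subset_union_left
  set T : Set α := ⋃ n, (Sseq n).1 with hT
  have hTA : T ⊆ A := iUnion_subset fun n => (Sseq n).2.1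
  have hTmeas : MeasurableSet T := MeasurableSet.iUnion fun n => (Sseq n).2.2.1
  have hTval : ν T = ⨆ n, ν (Sseq n).1 := Directed.measure_iUnion (hmono.directed_le)
  have hTler : ν T ≤ r := by
    rw [hTval]; exact iSup_le fun n => (Sseq n).2.2.2
  refine ⟨T, hTA, hTmeas, ?_⟩
  by_contra hne
  have hTlt : ν T < r := lt_of_le_of_ne hTler hne
  have hAT0 : ν (A \ T) ≠ 0 := by
    intro h0
    have : ν A ≤ ν T + ν (A \ T) := by
      refine (measure_mono ?_).trans (measure_union_le T (A \ T))
      intro x hx; by_cases hxT : x ∈ T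
      · exact Or.inl hxT
      · exact Or.inr ⟨hx, hxT⟩
    rw [h0, add_zero] at this
    exact absurd (hr.trans this) hTlt.not_ge
  obtain ⟨B₀, hB₀sub, hB₀meas, hB₀0, hB₀le⟩ :=
    exists_le hna (hA.diff hTmeas) hAT0 (tsub_pos_of_lt hTlt).ne'
  -- B₀ is admissible at every stage n
  have hadm : ∀ n, ν B₀ ≤ 2 * ν (pick (Sseq n).1 (Sseq n).2) := by
    intro n
    refine hpick₄ (Sseq n).1 (Sseq n).2 B₀ ?_ hB₀meas ?_
    · exact hB₀sub.trans (diff_subset_diff_right (le_iSup (fun n => (Sseq n).1) n))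
    · calc ν (Sseq n).1 + ν B₀ ≤ ν T + (r - ν T) := by
            refine add_le_add ?_ hB₀le
            rw [hTval]; exact le_iSup (fun n => ν (Sseq n).1) n
        _ = r := add_tsub_cancel_of_le hTlt.le
  set c : ℝ≥0∞ := ν B₀ / 2 with hc
  have hc0 : c ≠ 0 := by
    simp [hc, ENNReal.div_eq_zero_iff, hB₀0]
  have hct : c ≠ ⊤ := by
    simp [hc, ENNReal.div_eq_top, measure_ne_top ν B₀]
  have hstepge : ∀ n, ν (Sseq n).1 + c ≤ ν (Sseq (n + 1)).1 := by
    intro n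
    have hdisj : Disjoint (Sseq n).1 (pick (Sseq n).1 (Sseq n).2) :=
      Set.disjoint_left.mpr fun x hx hx' => ((hpick₁ _ _) hx').2 hx
    rw [hsucc, measure_union hdisj (hpick₂ _ _)]
    refine add_le_add le_rfl ?_
    have := hadm n
    rwa [hc, ENNReal.div_le_iff (by norm_num) (by norm_num), mul_comm]
  have hlb : ∀ n : ℕ, (n : ℝ≥0∞) * c ≤ ν (Sseq n).1 := by
    intro n
    induction n with
    | zero => simp
    | succ n ih =>
      calc ((n + 1 : ℕ) : ℝ≥0∞) * c = (n : ℝ≥0∞) * c + c := by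
            push_cast; ring
        _ ≤ ν (Sseq n).1 + c := add_le_add ih le_rfl
        _ ≤ ν (Sseq (n + 1)).1 := hstepge n
  obtain ⟨n, hn⟩ := ENNReal.exists_nat_gt
    (show r / c ≠ ⊤ by simp [ENNReal.div_eq_top, hc0, hrt])
  rw [ENNReal.div_lt_iff (Or.inl hc0) (Or.inl hct)] at hn
  have : r < r := by
    calc r < (n : ℝ≥0∞) * c := hn
      _ ≤ ν (Sseq n).1 := hlb n
      _ ≤ r := (Sseq n).2.2.2
  exact absurd this (lt_irrefl r)


private lemma cast_div_pow (m n : ℕ) : ((2 * m : ℕ) : ℝ≥0∞) / 2 ^ (n + 1) = (m : ℝ≥0∞) / 2 ^ n := by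
  push_cast
  rw [pow_succ, mul_comm ((2 : ℝ≥0∞) ^ n) 2, ENNReal.mul_div_mul_left _ _ (by simp) (by simp)]

lemma exists_nested (hna : NA ν) (h1 : ν univ = 1) :
    ∃ B : ℝ → Set α, Monotone B ∧ (∀ t, MeasurableSet (B t)) ∧ B 0 = ∅ ∧
      ∀ t ∈ Set.Icc (0 : ℝ) 1, ν (B t) = ENNReal.ofReal t := by
  classical
  set P : ℕ → (ℕ → Set α) → Prop := fun n a =>
    (∀ k, MeasurableSet (a k)) ∧ Monotone a ∧ a 0 = ∅ ∧
      (∀ k, ν (a k) = min ((k : ℝ≥0∞) / 2 ^ n) 1) with hP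
  have step : ∀ n (a : ℕ → Set α), P n a →
      ∃ a' : ℕ → Set α, P (n + 1) a' ∧ ∀ m, a' (2 * m) = a m := by
    rintro n a ⟨hmeas, hmono, hzero, hval⟩
    have key : ∀ m : ℕ, ∃ D, D ⊆ a (m + 1) \ a m ∧ MeasurableSet D ∧
        ν D = min (((2 * m + 1 : ℕ) : ℝ≥0∞) / 2 ^ (n + 1)) 1 - min ((m : ℝ≥0∞) / 2 ^ n) 1 := by
      intro m
      refine exists_exact hna ((hmeas (m + 1)).diff (hmeas m)) ?_
      have hdiffval : ν (a (m + 1) \ a m)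
          = min (((m : ℝ≥0∞) + 1) / 2 ^ n) 1 - min ((m : ℝ≥0∞) / 2 ^ n) 1 := by
        rw [measure_diff (hmono (Nat.le_succ m)) (hmeas m).nullMeasurableSet (measure_ne_top ν _),
          hval, hval]
        push_cast
        ring_nf
      rw [hdiffval]
      refine tsub_le_tsub_right (min_le_min ?_ le_rfl) _
      have : ((2 * m + 1 : ℕ) : ℝ≥0∞) ≤ ((2 * (m + 1) : ℕ) : ℝ≥0∞) := by
        exact_mod_cast Nat.le_of_lt (by omega)
      calc ((2 * m + 1 : ℕ) : ℝ≥0∞) / 2 ^ (n + 1) ≤ ((2 * (m + 1) : ℕ) : ℝ≥0∞) / 2 ^ (n + 1) :=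
            ENNReal.div_le_div_right this _
        _ = ((m : ℝ≥0∞) + 1) / 2 ^ n := by rw [cast_div_pow]; push_cast; ring_nf
    choose D hD1 hD2 hD3 using key
    have hmle : ∀ m : ℕ, min ((m : ℝ≥0∞) / 2 ^ n) 1
        ≤ min (((2 * m + 1 : ℕ) : ℝ≥0∞) / 2 ^ (n + 1)) 1 := by
      intro m
      refine min_le_min ?_ le_rfl
      rw [← cast_div_pow m n]
      refine ENNReal.div_le_div_right ?_ _
      exact_mod_cast Nat.le_succ _
    refine ⟨fun k => if Even k then a (k / 2) else a (k / 2) ∪ D (k / 2), ⟨?_, ?_, ?_, ?_⟩, ?_⟩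
    · intro k
      by_cases h : Even k <;> simp [h, hmeas, (hmeas _).union (hD2 _)]
    · refine monotone_nat_of_le_succ fun k => ?_
      rcases Nat.even_or_odd k with h | h
      · obtain ⟨m, rfl⟩ : ∃ m, k = 2 * m := by obtain ⟨m, hm⟩ := h; exact ⟨m, by omega⟩
        have h1 : Even (2 * m) := even_two_mul m
        have h2 : ¬ Even (2 * m + 1) := by simp [Nat.even_add_one, h1]
        have e1 : 2 * m / 2 = m := by omega
        have e2 : (2 * m + 1) / 2 = m := by omega
        simp only [h1, h2, if_true, if_false, e1, e2]
        exact subset_union_left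
      · obtain ⟨m, rfl⟩ : ∃ m, k = 2 * m + 1 := h
        have h2 : ¬ Even (2 * m + 1) := by simp [Nat.even_add_one]
        have h3 : Even (2 * m + 1 + 1) := by simp [Nat.even_add_one, h2]
        have e2 : (2 * m + 1) / 2 = m := by omega
        have e3 : (2 * m + 1 + 1) / 2 = m + 1 := by omega
        simp only [h2, h3, if_true, if_false, e2, e3]
        exact union_subset (hmono (Nat.le_succ m)) ((hD1 m).trans diff_subset)
    · simp [hzero]
    · intro k
      rcases Nat.even_or_odd k with h | h
      · obtain ⟨m, rfl⟩ : ∃ m, k = 2 * m := by obtain ⟨m, hm⟩ := h; exact ⟨m, by omega⟩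
        have e : 2 * m / 2 = m := by omega
        simp only [even_two_mul m, if_true, e]
        rw [hval, cast_div_pow]
      · obtain ⟨m, rfl⟩ : ∃ m, k = 2 * m + 1 := by obtain ⟨m, hm⟩ := h; exact ⟨m, by omega⟩
        have h' : ¬ Even (2 * m + 1) := by simp [Nat.even_add_one]
        have e : (2 * m + 1) / 2 = m := by omega
        simp only [h', if_false, e]
        have hdisj : Disjoint (a m) (D m) :=
          Set.disjoint_left.mpr fun x hx hx' => ((hD1 m) hx').2 hx
        rw [measure_union hdisj (hD2 m), hval, hD3, add_tsub_cancel_of_le (hmle m)]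
    · intro m
      have e : 2 * m / 2 = m := by omega
      simp [even_two_mul m, e]
  -- base level
  have base : P 0 (fun k => if k = 0 then ∅ else univ) := by
    refine ⟨fun k => by by_cases h : k = 0 <;> simp [h], ?_, by simp, ?_⟩
    · intro k k' hkk'
      by_cases h : k = 0
      · simp [h]
      · have h' : k' ≠ 0 := by omega
        simp [h, h']
    · intro k
      by_cases h : k = 0
      · simp [h]
      · have hk : (1 : ℝ≥0∞) ≤ (k : ℝ≥0∞) := by
          exact_mod_cast Nat.one_le_iff_ne_zero.mpr h
        have : (1 : ℝ≥0∞) ≤ (k : ℝ≥0∞) / 2 ^ 0 := by simpa using hk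
        simp only [h, if_false, h1, min_eq_right this]
  choose F hF1 hF2 using step
  let G : (n : ℕ) → {a : ℕ → Set α // P n a} := fun n =>
    Nat.rec ⟨_, base⟩ (fun n p => ⟨F n p.1 p.2, hF1 n p.1 p.2⟩) n
  have hGconsist : ∀ n m, (G (n + 1)).1 (2 * m) = (G n).1 m := fun n m => hF2 n (G n).1 (G n).2 m
  set B : ℝ → Set α := fun t => ⋃ n, (G n).1 (⌊t * 2 ^ n⌋₊) with hB
  have hchain : ∀ t : ℝ, 0 ≤ t → Monotone fun n => (G n).1 (⌊t * 2 ^ n⌋₊) := by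
    intro t ht
    refine monotone_nat_of_le_succ fun n => ?_
    have hle : 2 * ⌊t * 2 ^ n⌋₊ ≤ ⌊t * 2 ^ (n + 1)⌋₊ := by
      rw [Nat.le_floor_iff (by positivity)]
      push_cast
      calc (2 : ℝ) * ⌊t * 2 ^ n⌋₊ ≤ 2 * (t * 2 ^ n) := by
            have := Nat.floor_le (show (0:ℝ) ≤ t * 2 ^ n by positivity)
            linarith
        _ = t * 2 ^ (n + 1) := by ring
    rw [← hGconsist n]
    exact (G (n + 1)).2.2.1 hle
  refine ⟨B, ?_, ?_, ?_, ?_⟩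
  · intro s t hst
    refine Set.iUnion_mono fun n => ?_
    exact (G n).2.2.1 (Nat.floor_mono (by nlinarith [pow_pos (show (0:ℝ) < 2 by norm_num) n]))
  · exact fun t => MeasurableSet.iUnion fun n => (G n).2.1 _
  · have : ∀ n, (G n).1 (⌊(0 : ℝ) * 2 ^ n⌋₊) = ∅ := by
      intro n
      simp [(G n).2.2.2.1]
    simp only [hB, this, Set.iUnion_empty]
  · intro t ht
    have hval : ∀ n, ν ((G n).1 (⌊t * 2 ^ n⌋₊)) = ENNReal.ofReal ((⌊t * 2 ^ n⌋₊ : ℝ) / 2 ^ n) := by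
      intro n
      rw [(G n).2.2.2.2]
      have hfl : ⌊t * 2 ^ n⌋₊ ≤ 2 ^ n := by
        calc ⌊t * 2 ^ n⌋₊ ≤ ⌊(2 : ℝ) ^ n⌋₊ := Nat.floor_mono (by nlinarith [ht.2, pow_pos (show (0:ℝ) < 2 by norm_num) n])
          _ = 2 ^ n := by rw [show ((2:ℝ)^n) = ((2^n : ℕ) : ℝ) by push_cast; ring, Nat.floor_natCast]
      have hle1 : ((⌊t * 2 ^ n⌋₊ : ℝ≥0∞) / 2 ^ n) ≤ 1 := by
        rw [ENNReal.div_le_iff (by positivity) (by simp), one_mul]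
        exact_mod_cast hfl
      rw [min_eq_left hle1, ENNReal.ofReal_div_of_pos (by positivity), ENNReal.ofReal_natCast]
      congr 1
      rw [show ((2:ℝ)^n) = ((2^n : ℕ) : ℝ) by push_cast; ring, ENNReal.ofReal_natCast]
      push_cast; ring
    have htendsto : Tendsto (fun n => ν ((G n).1 (⌊t * 2 ^ n⌋₊))) atTop (nhds (ENNReal.ofReal t)) := by
      simp only [hval]
      refine ENNReal.tendsto_ofReal ?_
      refine tendsto_of_tendsto_of_tendsto_of_le_of_le
        (g := fun n => t - ((2:ℝ)⁻¹) ^ n) (h := fun _ => t) ?_ tendsto_const_nhds ?_ ?_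
      · have : Tendsto (fun n : ℕ => ((2:ℝ)⁻¹) ^ n) atTop (nhds 0) :=
          tendsto_pow_atTop_nhds_zero_of_lt_one (by norm_num) (by norm_num)
        simpa using tendsto_const_nhds.sub this
      · intro n
        have h2n : (0:ℝ) < 2 ^ n := by positivity
        have := Nat.sub_one_lt_floor (t * 2 ^ n)
        rw [le_div_iff₀ h2n]
        have e : ((2:ℝ)⁻¹) ^ n * 2 ^ n = 1 := by
          rw [inv_pow, inv_mul_cancel₀ h2n.ne']
        nlinarith [this, e]
      · intro n
        have h2n : (0:ℝ) < 2 ^ n := by positivity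
        rw [div_le_iff₀ h2n]
        exact Nat.floor_le (mul_nonneg ht.1 (by positivity))
    have hlim := tendsto_measure_iUnion_atTop (μ := ν) (hchain t ht.1)
    exact tendsto_nhds_unique hlim htendsto


end GirthAux

/-- For a σ-finite atomless measure `μ`, every norm-one `f ∈ L¹(μ)` is joined to `−f`
by a girth curve, i.e. a curve on the unit sphere of length `2`. -/
theorem exists_girth_curve {α : Type*} [MeasurableSpace α] (μ : Measure α)
    [SigmaFinite μ] (hμ : ∀ A : Set α, ¬ IsMeasureAtom μ A)
    (f : Lp ℂ 1 μ) (hf : ‖f‖ = 1) :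
    ∃ γ : ℝ → Lp ℂ 1 μ, γ 0 = f ∧ γ 2 = -f ∧
      (∀ t ∈ Set.Icc (0 : ℝ) 2, ‖γ t‖ = 1) ∧
      (∀ s ∈ Set.Icc (0 : ℝ) 2, ∀ t ∈ Set.Icc (0 : ℝ) 2, ‖γ s - γ t‖ = |s - t|) := by
  classical
  set w : α → ℝ≥0∞ := fun x => (‖f x‖₊ : ℝ≥0∞) with hw
  have hwmeas : Measurable w := (Lp.stronglyMeasurable f).measurable.nnnorm.coe_nnreal_ennreal
  set ν : Measure α := μ.withDensity w with hνdef
  have hwint : ∫⁻ x, w x ∂μ = 1 := by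
    have h1 : eLpNorm (f : α → ℂ) 1 μ ≠ ⊤ := Lp.eLpNorm_ne_top f
    have h2 : (eLpNorm (f : α → ℂ) 1 μ).toReal = 1 := by rw [← Lp.norm_def]; exact hf
    have h3 : eLpNorm (f : α → ℂ) 1 μ = 1 := by
      rw [← ENNReal.ofReal_toReal h1, h2]; simp
    exact (eLpNorm_one_eq_lintegral_enorm).symm.trans h3
  have hνapp : ∀ {s : Set α}, MeasurableSet s → ν s = ∫⁻ x in s, w x ∂μ := by
    intro s hs; rw [hνdef, withDensity_apply w hs]
  have hν1 : ν univ = 1 := by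
    rw [hνapp MeasurableSet.univ, Measure.restrict_univ]; exact hwint
  haveI : IsFiniteMeasure ν := ⟨by rw [hν1]; exact ENNReal.one_lt_top⟩
  have hμν : ∀ {s : Set α}, MeasurableSet s → μ s = 0 → ν s = 0 := by
    intro s hs h0
    rw [hνapp hs, Measure.restrict_eq_zero.mpr h0, lintegral_zero_measure]
  have hνzero : ∀ {s : Set α}, MeasurableSet s → ν s = 0 → ∀ᵐ x ∂μ, x ∈ s → f x = 0 := by
    intro s hs h0
    rw [hνapp hs, lintegral_eq_zero_iff hwmeas] at h0
    filter_upwards [(ae_restrict_iff' hs).mp h0] with x hx hxs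
    have := hx hxs
    simpa [hw] using this
  -- ν is nonatomic
  have hna : GirthAux.NA ν := by
    intro A hA hA0
    by_contra hcon
    push_neg at hcon
    -- hcon : ∀ B, B ⊆ A → MeasurableSet B → ν B ≠ 0 → ν B = ν A
    have hspan : Monotone fun n => A ∩ spanningSets μ n :=
      fun i j hij => inter_subset_inter subset_rfl (monotone_spanningSets μ hij)
    have hAsup : ν A = ⨆ n, ν (A ∩ spanningSets μ n) := by
      rw [← Directed.measure_iUnion hspan.directed_le, ← inter_iUnion, iUnion_spanningSets,
        inter_univ]
    have hex : ∃ n, ν (A ∩ spanningSets μ n) ≠ 0 := by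
      by_contra h
      push_neg at h
      rw [hAsup] at hA0
      simp only [h] at hA0
      simp at hA0
    obtain ⟨n, hn⟩ := hex
    set A' : Set α := A ∩ spanningSets μ n with hA'
    have hA'meas : MeasurableSet A' := hA.inter (measurableSet_spanningSets μ n)
    have hA'sub : A' ⊆ A := inter_subset_left
    have hA'val : ν A' = ν A := hcon A' hA'sub hA'meas hn
    have hA'fin : μ A' ≠ ⊤ :=
      ((measure_mono inter_subset_right).trans_lt (measure_spanningSets_lt_top μ n)).ne
    set m : ℝ≥0∞ := ⨅ (B : Set α) (_ : B ⊆ A' ∧ MeasurableSet B ∧ ν B = ν A), μ B with hm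
    have hmle : m ≤ μ A' := iInf₂_le A' ⟨subset_rfl, hA'meas, hA'val⟩
    have hmfin : m ≠ ⊤ := ne_top_of_le_ne_top hA'fin hmle
    have hseq : ∀ k : ℕ, ∃ B, (B ⊆ A' ∧ MeasurableSet B ∧ ν B = ν A) ∧
        μ B < m + ((k : ℝ≥0∞) + 1)⁻¹ := by
      intro k
      have hlt : m < m + ((k : ℝ≥0∞) + 1)⁻¹ := ENNReal.lt_add_right hmfin (by simp)
      obtain ⟨B, hB⟩ := iInf_lt_iff.mp hlt
      obtain ⟨hBC, hBlt⟩ := iInf_lt_iff.mp hB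
      exact ⟨B, hBC, hBlt⟩
    choose Bs hBsC hBslt using hseq
    set Binf : Set α := ⋂ k, Bs k with hBinf
    have hBinfmeas : MeasurableSet Binf := MeasurableSet.iInter fun k => (hBsC k).2.1
    have hBinfsub : Binf ⊆ A' := (Set.iInter_subset Bs 0).trans (hBsC 0).1
    have hdiff0 : ∀ k, ν (A' \ Bs k) = 0 := by
      intro k
      rw [measure_diff (hBsC k).1 (hBsC k).2.1.nullMeasurableSet (measure_ne_top ν _),
        (hBsC k).2.2, hA'val, tsub_self]
    have hcompl0 : ν (A' \ Binf) = 0 := by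
      have hsub : A' \ Binf ⊆ ⋃ k, (A' \ Bs k) := by
        intro x hx
        simp only [hBinf, mem_diff, mem_iInter, not_forall] at hx
        obtain ⟨hxA, k, hk⟩ := hx
        exact mem_iUnion.mpr ⟨k, hxA, hk⟩
      refine le_antisymm ?_ zero_le
      calc ν (A' \ Binf) ≤ ν (⋃ k, (A' \ Bs k)) := measure_mono hsub
        _ ≤ ∑' k, ν (A' \ Bs k) := measure_iUnion_le _
        _ = 0 := by simp [hdiff0]
    have hBinfval : ν Binf = ν A := by
      refine le_antisymm ((measure_mono (hBinfsub.trans hA'sub))) ?_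
      calc ν A = ν A' := hA'val.symm
        _ ≤ ν Binf + ν (A' \ Binf) := by
            refine (measure_mono ?_).trans (measure_union_le _ _)
            intro x hx
            by_cases h : x ∈ Binf
            · exact Or.inl h
            · exact Or.inr ⟨hx, h⟩
        _ = ν Binf := by rw [hcompl0, add_zero]
    have hmleBinf : m ≤ μ Binf := iInf₂_le Binf ⟨hBinfsub, hBinfmeas, hBinfval⟩
    have hμBinfm : μ Binf = m := by
      refine le_antisymm ?_ hmleBinf
      refine ENNReal.le_of_forall_pos_le_add fun ε hε _ => ?_
      obtain ⟨k, hk⟩ := ENNReal.exists_inv_nat_lt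
        (show (ε : ℝ≥0∞) ≠ 0 by exact_mod_cast hε.ne')
      calc μ Binf ≤ μ (Bs k) := measure_mono (Set.iInter_subset Bs k)
        _ ≤ m + ((k : ℝ≥0∞) + 1)⁻¹ := (hBslt k).le
        _ ≤ m + (k : ℝ≥0∞)⁻¹ := by
            refine add_le_add le_rfl (ENNReal.inv_le_inv.mpr le_self_add)
        _ ≤ m + ε := add_le_add le_rfl hk.le
    have hμBinf0 : 0 < μ Binf := by
      rcases eq_or_ne (μ Binf) 0 with h | h
      · exact absurd (hBinfval ▸ hμν hBinfmeas h) hA0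
      · exact pos_iff_ne_zero.mpr h
    have hμBinffin : μ Binf < ⊤ :=
      (measure_mono hBinfsub).trans_lt (lt_top_iff_ne_top.mpr hA'fin)
    refine hμ Binf ⟨hBinfmeas, hμBinf0, hμBinffin, ?_⟩
    intro Cs hCs hCsm
    rcases eq_or_ne (ν Cs) 0 with hνCs | hνCs
    · left
      have hrest : ν (Binf \ Cs) = ν A := by
        rw [measure_diff hCs hCsm.nullMeasurableSet (measure_ne_top ν _), hBinfval, hνCs,
          tsub_zero]
      have hmem : m ≤ μ (Binf \ Cs) :=
        iInf₂_le (Binf \ Cs) ⟨diff_subset.trans hBinfsub, hBinfmeas.diff hCsm, hrest⟩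
      have hsum : μ Cs + μ (Binf \ Cs) = μ Binf := by
        rw [← measure_union (disjoint_sdiff_right) (hBinfmeas.diff hCsm),
          Set.union_diff_cancel hCs]
      have : μ Cs + μ Binf ≤ 0 + μ Binf := by
        calc μ Cs + μ Binf = μ Cs + m := by rw [hμBinfm]
          _ ≤ μ Cs + μ (Binf \ Cs) := add_le_add le_rfl hmem
          _ = μ Binf := hsum
          _ = 0 + μ Binf := (zero_add _).symm
      exact le_antisymm ((ENNReal.add_le_add_iff_right hμBinffin.ne).mp this) zero_le
    · right
      have hνCsA : ν Cs = ν A := hcon Cs (hCs.trans (hBinfsub.trans hA'sub)) hCsm hνCs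
      have h1 : m ≤ μ Cs := iInf₂_le Cs ⟨hCs.trans hBinfsub, hCsm, hνCsA⟩
      exact le_antisymm (measure_mono hCs) (hμBinfm ▸ h1)
  -- the nested family
  obtain ⟨B, hBmono, hBmeas, hB0, hBval⟩ := GirthAux.exists_nested hna hν1
  -- the curve
  set g : ℝ → α → ℂ := fun t x => if x ∈ B (t / 2) then -(f x) else f x with hg
  have hgmeas : ∀ t, StronglyMeasurable (g t) := fun t =>
    StronglyMeasurable.ite (hBmeas (t / 2)) (Lp.stronglyMeasurable f).neg
      (Lp.stronglyMeasurable f)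
  have hgnorm : ∀ t x, (‖g t x‖₊ : ℝ≥0∞) = w x := by
    intro t x
    by_cases h : x ∈ B (t / 2) <;> simp [hg, h, hw]
  have hgsnorm : ∀ t, eLpNorm (g t) 1 μ = 1 := by
    intro t
    rw [eLpNorm_one_eq_lintegral_enorm]
    simp_rw [enorm_eq_nnnorm, hgnorm]
    exact hwint
  have hgmem : ∀ t, MemLp (g t) 1 μ := fun t =>
    ⟨(hgmeas t).aestronglyMeasurable, by rw [hgsnorm]; exact ENNReal.one_lt_top⟩
  refine ⟨fun t => (hgmem t).toLp (g t), ?_, ?_, ?_, ?_⟩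
  · -- γ 0 = f
    have hgeq : g 0 = (f : α → ℂ) := by
      funext x
      simp [hg, zero_div, hB0]
    exact ((hgmem 0).toLp_congr (Lp.memLp f) (by rw [hgeq])).trans
      (Lp.toLp_coeFn f (Lp.memLp f))
  · -- γ 2 = -f
    have hB1 : ν (univ \ B 1) = 0 := by
      rw [measure_diff (subset_univ _) (hBmeas 1).nullMeasurableSet (measure_ne_top ν _), hν1,
        hBval 1 ⟨zero_le_one, le_refl 1⟩, ENNReal.ofReal_one, tsub_self]
    have hae : ∀ᵐ x ∂μ, x ∈ univ \ B 1 → f x = 0 :=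
      hνzero (MeasurableSet.univ.diff (hBmeas 1)) hB1
    have hgeq : g 2 =ᵐ[μ] fun x => -(f x) := by
      filter_upwards [hae] with x hx
      by_cases h : x ∈ B 1
      · simp [hg, show (2 : ℝ) / 2 = 1 by norm_num, h]
      · have hfx : f x = 0 := hx ⟨trivial, h⟩
        simp [hg, show (2 : ℝ) / 2 = 1 by norm_num, h, hfx]
    have hneg : ((-f : Lp ℂ 1 μ) : α → ℂ) =ᵐ[μ] fun x => -(f x) := Lp.coeFn_neg f
    exact ((hgmem 2).toLp_congr (Lp.memLp (-f)) (hgeq.trans hneg.symm)).trans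
      (Lp.toLp_coeFn (-f) (Lp.memLp (-f)))
  · -- norms
    intro t _
    rw [Lp.norm_toLp, hgsnorm]
    simp
  · -- distances
    have hkey : ∀ s t : ℝ, 0 ≤ s → s ≤ t → t ≤ 2 →
        eLpNorm (g s - g t) 1 μ = ENNReal.ofReal (t - s) := by
      intro s t hs hst ht2
      have hsub : B (s / 2) ⊆ B (t / 2) := hBmono (by linarith)
      have hpt : ∀ x, (‖(g s - g t) x‖₊ : ℝ≥0∞)
          = (B (t / 2) \ B (s / 2)).indicator (fun y => 2 * w y) x := by
        intro x
        by_cases hxs : x ∈ B (s / 2)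
        · have hxt : x ∈ B (t / 2) := hsub hxs
          simp [hg, hxs, hxt, Set.indicator_of_notMem, Set.mem_diff]
        · by_cases hxt : x ∈ B (t / 2)
          · have he : f x - -(f x) = (2 : ℂ) * f x := by ring
            simp only [Pi.sub_apply, hg, if_neg hxs, if_pos hxt, he,
              Set.indicator_of_mem (Set.mem_diff_of_mem hxt hxs)]
            rw [nnnorm_mul]
            push_cast
            congr 1
            simp
          · simp [hg, hxs, hxt, Set.indicator_of_notMem, Set.mem_diff]
      have hDmeas : MeasurableSet (B (t / 2) \ B (s / 2)) := (hBmeas _).diff (hBmeas _)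
      have hDval : ν (B (t / 2) \ B (s / 2)) = ENNReal.ofReal ((t - s) / 2) := by
        rw [measure_diff hsub (hBmeas _).nullMeasurableSet (measure_ne_top ν _),
          hBval (t / 2) ⟨by linarith, by linarith⟩, hBval (s / 2) ⟨by linarith, by linarith⟩,
          ← ENNReal.ofReal_sub _ (by linarith : (0:ℝ) ≤ s / 2)]
        congr 1
        ring
      calc eLpNorm (g s - g t) 1 μ = ∫⁻ x, (‖(g s - g t) x‖₊ : ℝ≥0∞) ∂μ :=
            eLpNorm_one_eq_lintegral_enorm
        _ = ∫⁻ x, (B (t / 2) \ B (s / 2)).indicator (fun y => 2 * w y) x ∂μ := by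
            exact lintegral_congr hpt
        _ = ∫⁻ x in B (t / 2) \ B (s / 2), 2 * w x ∂μ := lintegral_indicator hDmeas _
        _ = 2 * ∫⁻ x in B (t / 2) \ B (s / 2), w x ∂μ := lintegral_const_mul 2 hwmeas
        _ = 2 * ν (B (t / 2) \ B (s / 2)) := by rw [← hνapp hDmeas]
        _ = 2 * ENNReal.ofReal ((t - s) / 2) := by rw [hDval]
        _ = ENNReal.ofReal (t - s) := by
            rw [show (2 : ℝ≥0∞) = ENNReal.ofReal 2 by simp,
              ← ENNReal.ofReal_mul (by norm_num : (0:ℝ) ≤ 2)]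
            congr 1
            ring
    have hdist : ∀ s t : ℝ, 0 ≤ s → s ≤ t → t ≤ 2 →
        ‖(hgmem s).toLp (g s) - (hgmem t).toLp (g t)‖ = t - s := by
      intro s t hs hst ht2
      rw [← MemLp.toLp_sub (hgmem s) (hgmem t), Lp.norm_toLp, hkey s t hs hst ht2,
        ENNReal.toReal_ofReal (by linarith)]
    intro s hsI t htI
    rcases le_total s t with h | h
    · rw [hdist s t hsI.1 h htI.2, abs_of_nonpos (by linarith), neg_sub]
    · rw [norm_sub_rev, hdist t s htI.1 h hsI.2, abs_of_nonneg (by linarith)]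
end

section
/- Let μ be a measure and let A be an atom of μ, i.e. a measurable set with 0 < μ(A) < ∞ such that every measurable subset B ⊆ A satisfies μ(B) = 0 or μ(B) = μ(A). Set f := 1_A ∈ L¹(μ). Then there is no g ∈ L¹(μ) satisfying ‖f + g‖₁ = ‖f − g‖₁ = ‖f‖₁ = ‖g‖₁. -/
open MeasureTheory

/-- If `A` is an atom of `μ` and `f := 1_A`, then there is no `g ∈ L¹(μ)` with
`‖f + g‖₁ = ‖f − g‖₁ = ‖f‖₁ = ‖g‖₁`. -/
theorem no_solution_of_atom {α : Type*} [MeasurableSpace α] (μ : Measure α)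
    (A : Set α) (hA : IsMeasureAtom μ A) :
    ¬ ∃ g : α → ℂ, Integrable g μ ∧
      (∫ x, ‖A.indicator (fun _ => (1 : ℂ)) x + g x‖ ∂μ
        = ∫ x, ‖A.indicator (fun _ => (1 : ℂ)) x‖ ∂μ) ∧
      (∫ x, ‖A.indicator (fun _ => (1 : ℂ)) x - g x‖ ∂μ
        = ∫ x, ‖A.indicator (fun _ => (1 : ℂ)) x‖ ∂μ) ∧
      (∫ x, ‖g x‖ ∂μ = ∫ x, ‖A.indicator (fun _ => (1 : ℂ)) x‖ ∂μ) := by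
  rintro ⟨g, hg, h1, h2, h3⟩
  obtain ⟨hAm, hA0, hAtop, hatom⟩ := hA
  set f : α → ℂ := A.indicator (fun _ => (1 : ℂ)) with hf_def
  have hf : Integrable f μ :=
    (integrable_indicator_iff hAm).2 ((integrableOn_const_iff (C := (1:ℂ))).2 (Or.inr hAtop))
  have hnormf : ∀ x, ‖f x‖ = A.indicator (fun _ => (1 : ℝ)) x := by
    intro x
    by_cases hx : x ∈ A <;>
      simp [hf_def, Set.indicator_of_mem, Set.indicator_of_notMem, hx]
  have hIf : ∫ x, ‖f x‖ ∂μ = (μ A).toReal := by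
    simp_rw [hnormf]
    rw [integral_indicator_const _ hAm]; simp; rfl
  have hint1 : Integrable (fun x => ‖f x + g x‖) μ := (hf.add hg).norm
  have hint2 : Integrable (fun x => ‖f x - g x‖) μ := (hf.sub hg).norm
  -- pointwise: ‖f+g‖ + ‖f-g‖ ≥ 2‖f‖ and ≥ 2‖g‖
  have hpt1 : ∀ x, 2 * ‖f x‖ ≤ ‖f x + g x‖ + ‖f x - g x‖ := by
    intro x
    have h := norm_add_le (f x + g x) (f x - g x)
    have e : f x + g x + (f x - g x) = 2 * f x := by ring
    rw [e, norm_mul] at h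
    simpa using h
  have hpt2 : ∀ x, 2 * ‖g x‖ ≤ ‖f x + g x‖ + ‖f x - g x‖ := by
    intro x
    have h := norm_sub_le (f x + g x) (f x - g x)
    have e : f x + g x - (f x - g x) = 2 * g x := by ring
    rw [e, norm_mul] at h
    simpa using h
  have hzero : ∀ (F : α → ℂ), Integrable F μ →
      (∀ x, 2 * ‖F x‖ ≤ ‖f x + g x‖ + ‖f x - g x‖) →
      (∫ x, ‖F x‖ ∂μ = (μ A).toReal) →
      ∀ᵐ x ∂μ, ‖f x + g x‖ + ‖f x - g x‖ = 2 * ‖F x‖ := by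
    intro F hF hle hIF
    have hnn : 0 ≤ᵐ[μ] fun x => ‖f x + g x‖ + ‖f x - g x‖ - 2 * ‖F x‖ :=
      Filter.Eventually.of_forall fun x => by
        simp only [Pi.zero_apply]; linarith [hle x]
    have hadd : Integrable (fun x => ‖f x + g x‖ + ‖f x - g x‖) μ := hint1.add hint2
    have hint : Integrable (fun x => ‖f x + g x‖ + ‖f x - g x‖ - 2 * ‖F x‖) μ :=
      hadd.sub (hF.norm.const_mul 2)
    have hI0 : ∫ x, (‖f x + g x‖ + ‖f x - g x‖ - 2 * ‖F x‖) ∂μ = 0 := by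
      rw [integral_sub hadd (hF.norm.const_mul 2),
        integral_add hint1 hint2, integral_const_mul]
      rw [h1, h2, hIF, hIf]
      ring
    have := (integral_eq_zero_iff_of_nonneg_ae hnn hint).mp hI0
    filter_upwards [this] with x hx
    have : ‖f x + g x‖ + ‖f x - g x‖ - 2 * ‖F x‖ = 0 := hx
    linarith
  have e1 := hzero f hf hpt1 hIf
  have h3' : ∫ x, ‖g x‖ ∂μ = (μ A).toReal := by rw [h3, hIf]
  have e2 := hzero g hg hpt2 h3'
  have key : ∀ᵐ x ∂μ, g x = f x ∨ g x = -f x := by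
    filter_upwards [e1, e2] with x hx1 hx2
    have par : ‖f x + g x‖ * ‖f x + g x‖ + ‖f x - g x‖ * ‖f x - g x‖
        = 2 * (‖f x‖ * ‖f x‖ + ‖g x‖ * ‖g x‖) :=
      by simpa only [sq] using parallelogram_law_with_norm ℂ (f x) (g x)
    have hfg : ‖f x‖ = ‖g x‖ := by linarith
    have hst : ‖f x + g x‖ * ‖f x - g x‖ = 0 := by
      linear_combination ((‖f x + g x‖ + ‖f x - g x‖ + 2 * ‖f x‖) / 2) * hx1
        - (1 / 2) * par + (‖f x‖ + ‖g x‖) * hfg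
    rcases mul_eq_zero.mp hst with h | h
    · right
      have : f x + g x = 0 := norm_eq_zero.mp h
      linear_combination this
    · left
      have : f x - g x = 0 := norm_eq_zero.mp h
      linear_combination -this
  -- measurable representative
  set g' : α → ℂ := hg.1.mk g with hg'_def
  have hgg' : g =ᵐ[μ] g' := hg.1.ae_eq_mk
  have hg'm : Measurable g' := hg.1.stronglyMeasurable_mk.measurable
  set B : Set α := A ∩ g' ⁻¹' {1} with hB_def
  have hBm : MeasurableSet B := hAm.inter (hg'm (measurableSet_singleton 1))
  have hBA : B ⊆ A := Set.inter_subset_left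
  have hpos : (0:ℝ) < (μ A).toReal := ENNReal.toReal_pos hA0.ne' hAtop.ne
  -- helper to compute the integrals once g is constant on A
  have hcalc : ∀ (F : α → ℂ), (∀ᵐ x ∂μ, ‖F x‖ = A.indicator (fun _ => (2:ℝ)) x) →
      ∫ x, ‖F x‖ ∂μ = 2 * (μ A).toReal := by
    intro F hF
    rw [integral_congr_ae hF, integral_indicator_const _ hAm]
    simp [mul_comm]; rfl
  have hoffA : ∀ᵐ x ∂μ, x ∉ A → g x = 0 := by
    filter_upwards [key] with x hx hxA
    have hfx : f x = 0 := Set.indicator_of_notMem hxA _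
    rcases hx with h | h <;> simp [h, hfx]
  rcases hatom B hBA hBm with hB0 | hBA'
  · -- g = -1 a.e. on A, so ‖f - g‖₁ = 2 μ A
    have honA : ∀ᵐ x ∂μ, x ∈ A → g x = -1 := by
      have hBc : ∀ᵐ x ∂μ, x ∉ B := by
        rw [ae_iff]; simpa using hB0
      filter_upwards [key, hgg', hBc] with x hx hx' hxB hxA
      have hfx : f x = 1 := Set.indicator_of_mem hxA _
      rcases hx with h | h
      · exfalso
        exact hxB ⟨hxA, by simp [← hx', h, hfx]⟩
      · rw [h, hfx]
    have : ∫ x, ‖f x - g x‖ ∂μ = 2 * (μ A).toReal := by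
      apply hcalc
      filter_upwards [honA, hoffA] with x h1x h2x
      by_cases hx : x ∈ A
      · rw [Set.indicator_of_mem hx, h1x hx, hf_def, Set.indicator_of_mem hx]
        norm_num
      · rw [Set.indicator_of_notMem hx, h2x hx, hf_def, Set.indicator_of_notMem hx]
        simp
    rw [h2, hIf] at this
    linarith
  · -- g = 1 a.e. on A, so ‖f + g‖₁ = 2 μ A
    have honA : ∀ᵐ x ∂μ, x ∈ A → g x = 1 := by
      have hdiff : μ (A \ B) = 0 := by
        rw [measure_diff hBA hBm.nullMeasurableSet (hBA' ▸ hAtop.ne), hBA']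
        simp
      have hBc : ∀ᵐ x ∂μ, x ∉ A \ B := by
        rw [ae_iff]; simp only [not_not, Set.setOf_mem_eq]; exact hdiff
      filter_upwards [hgg', hBc] with x hx' hxB hxA
      have : x ∈ B := by
        by_contra h
        exact hxB ⟨hxA, h⟩
      rw [hx']
      exact this.2
    have : ∫ x, ‖f x + g x‖ ∂μ = 2 * (μ A).toReal := by
      apply hcalc
      filter_upwards [honA, hoffA] with x h1x h2x
      by_cases hx : x ∈ A
      · rw [Set.indicator_of_mem hx, h1x hx, hf_def, Set.indicator_of_mem hx]
        norm_num
      · rw [Set.indicator_of_notMem hx, h2x hx, hf_def, Set.indicator_of_notMem hx]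
        simp
    rw [h1, hIf] at this
    linarith
end

section
/- Let μ be a measure, let A be an atom of μ, and set f := 1_A ∈ L¹(μ). Then for every ψ ∈ L¹(μ) with ‖ψ‖₁ = ‖f‖₁, one has max(‖f + ψ‖₁, ‖f − ψ‖₁) ≥ √2 · ‖f‖₁. -/
open MeasureTheory

theorem ae_const_on_atom {α : Type*} [MeasurableSpace α] (μ : Measure α)
    (A : Set α) (hA : IsMeasureAtom μ A) (ψ : α → ℂ) (hψ : AEStronglyMeasurable ψ μ) :
    ∃ c : ℂ, ψ =ᵐ[μ.restrict A] fun _ => c := by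
  obtain ⟨hmA, hpos, hfin, hatom⟩ := hA
  set ψ' := hψ.aemeasurable.mk ψ with hψ'def
  have hψ'meas : Measurable ψ' := hψ.aemeasurable.measurable_mk
  have hψψ' : ψ =ᵐ[μ] ψ' := hψ.aemeasurable.ae_eq_mk
  have hsep : ∀ U : Set ℂ, MeasurableSet U →
      (∀ᶠ x in ae (μ.restrict A), ψ' x ∈ U) ∨ (∀ᶠ x in ae (μ.restrict A), ψ' x ∉ U) := by
    intro U hU
    rcases hatom (A ∩ ψ' ⁻¹' U) Set.inter_subset_left (hmA.inter (hψ'meas hU)) with h0 | hfull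
    · right
      have : μ.restrict A (ψ' ⁻¹' U) = 0 := by
        rw [Measure.restrict_apply (hψ'meas hU), Set.inter_comm]; exact h0
      exact measure_eq_zero_iff_ae_notMem.1 this
    · left
      have he : ψ' ⁻¹' Uᶜ ∩ A = A \ (A ∩ ψ' ⁻¹' U) := by
        ext x; simp [Set.mem_diff]; tauto
      have hz : μ.restrict A (ψ' ⁻¹' Uᶜ) = 0 := by
        rw [Measure.restrict_apply (hψ'meas hU.compl), he,
          measure_diff Set.inter_subset_left (hmA.inter (hψ'meas hU)).nullMeasurableSet
            (by rw [hfull]; exact hfin.ne), hfull, tsub_self]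
      filter_upwards [measure_eq_zero_iff_ae_notMem.1 hz] with x hx
      simpa using hx
  obtain ⟨c, hc⟩ := Filter.exists_eventuallyEq_const_of_forall_separating
      (l := ae (μ.restrict A)) (f := ψ') MeasurableSet hsep
  exact ⟨c, Filter.EventuallyEq.trans (ae_restrict_of_ae hψψ') hc⟩

set_option maxHeartbeats 1000000 in
/-- If `A` is an atom of `μ` and `f := 1_A`, then for every `ψ ∈ L¹(μ)` with
`‖ψ‖₁ = ‖f‖₁` one has `max(‖f + ψ‖₁, ‖f − ψ‖₁) ≥ √2 · ‖f‖₁`. -/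
theorem sqrt_two_obstruction_of_atom {α : Type*} [MeasurableSpace α] (μ : Measure α)
    (A : Set α) (hA : IsMeasureAtom μ A) (ψ : α → ℂ) (hψ : Integrable ψ μ)
    (hnorm : ∫ x, ‖ψ x‖ ∂μ = ∫ x, ‖A.indicator (fun _ => (1 : ℂ)) x‖ ∂μ) :
    Real.sqrt 2 * ∫ x, ‖A.indicator (fun _ => (1 : ℂ)) x‖ ∂μ ≤
      max (∫ x, ‖A.indicator (fun _ => (1 : ℂ)) x + ψ x‖ ∂μ)
        (∫ x, ‖A.indicator (fun _ => (1 : ℂ)) x - ψ x‖ ∂μ) := by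
  obtain ⟨c, hc⟩ := ae_const_on_atom μ A hA ψ hψ.1
  obtain ⟨hmA, hpos, hfin, -⟩ := hA
  set f : α → ℂ := A.indicator (fun _ => (1 : ℂ)) with hfdef
  set m : ℝ := (μ A).toReal with hmdef
  have hm : 0 < m := ENNReal.toReal_pos hpos.ne' hfin.ne
  have hf_int : Integrable f μ :=
    (integrable_indicator_iff hmA).2 (integrableOn_const hfin.ne)
  -- ‖f‖₁ = m
  have hfnorm : ∫ x, ‖f x‖ ∂μ = m := by
    have h1 : (fun x => ‖f x‖) = A.indicator (fun _ => (1 : ℝ)) := by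
      funext x
      by_cases hx : x ∈ A <;> simp [hfdef, Set.indicator_of_mem, Set.indicator_of_notMem, hx]
    rw [h1, integral_indicator_const (1 : ℝ) hmA, smul_eq_mul, mul_one]; rfl
  -- key splitting lemma
  have key : ∀ (g : α → ℂ) (d : ℂ), Integrable g μ → (g =ᵐ[μ.restrict A] fun _ => d) →
      ∫ x, ‖g x‖ ∂μ = ‖d‖ * m + ∫ x in Aᶜ, ‖g x‖ ∂μ := by
    intro g d hg hgd
    rw [← integral_add_compl hmA hg.norm]
    congr 1
    have : ∫ x in A, ‖g x‖ ∂μ = ∫ _x in A, ‖d‖ ∂μ :=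
      integral_congr_ae (hgd.mono fun x hx => by simp only []; rw [show g x = d from hx])
    rw [this, setIntegral_const, smul_eq_mul, mul_comm]; rfl
  -- ψ on A
  have hψA : ψ =ᵐ[μ.restrict A] fun _ => c := hc
  have hfA : ∀ᵐ x ∂μ.restrict A, f x = 1 := by
    rw [ae_restrict_iff' hmA]
    filter_upwards with x hx
    simp [hfdef, Set.indicator_of_mem hx]
  have haddA : (fun x => f x + ψ x) =ᵐ[μ.restrict A] fun _ => 1 + c := by
    filter_upwards [hψA, hfA] with x h1 h2; rw [h1, h2]
  have hsubA : (fun x => f x - ψ x) =ᵐ[μ.restrict A] fun _ => 1 - c := by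
    filter_upwards [hψA, hfA] with x h1 h2; rw [h1, h2]
  have hoffadd : ∫ x in Aᶜ, ‖f x + ψ x‖ ∂μ = ∫ x in Aᶜ, ‖ψ x‖ ∂μ := by
    refine setIntegral_congr_fun hmA.compl fun x hx => ?_
    simp only [hfdef, Set.indicator_of_notMem (Set.notMem_compl_iff.1 (Set.not_notMem.2 hx)),
      zero_add]
  have hoffsub : ∫ x in Aᶜ, ‖f x - ψ x‖ ∂μ = ∫ x in Aᶜ, ‖ψ x‖ ∂μ := by
    refine setIntegral_congr_fun hmA.compl fun x hx => ?_
    simp only [hfdef, Set.indicator_of_notMem (Set.notMem_compl_iff.1 (Set.not_notMem.2 hx)),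
      zero_sub, norm_neg]
  set T : ℝ := ∫ x in Aᶜ, ‖ψ x‖ ∂μ with hTdef
  have hT0 : 0 ≤ T := setIntegral_nonneg hmA.compl fun x _ => norm_nonneg _
  have hψeq : ∫ x, ‖ψ x‖ ∂μ = ‖c‖ * m + T := key ψ c hψ hψA
  have hTm : ‖c‖ * m + T = m := by rw [← hψeq, hnorm, hfnorm]
  have hadd : ∫ x, ‖f x + ψ x‖ ∂μ = ‖1 + c‖ * m + T := by
    rw [key (fun x => f x + ψ x) (1 + c) (hf_int.add hψ) haddA, hoffadd]
  have hsub : ∫ x, ‖f x - ψ x‖ ∂μ = ‖1 - c‖ * m + T := by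
    rw [key (fun x => f x - ψ x) (1 - c) (hf_int.sub hψ) hsubA, hoffsub]
  set r : ℝ := ‖c‖ with hrdef
  have hr0 : 0 ≤ r := norm_nonneg _
  have hr1 : r ≤ 1 := by nlinarith
  set a : ℝ := ‖1 + c‖ with hadef
  set b : ℝ := ‖1 - c‖ with hbdef
  have ha0 : 0 ≤ a := norm_nonneg _
  have hb0 : 0 ≤ b := norm_nonneg _
  have hpar : a * a + b * b = 2 * (1 + r * r) := by
    have := parallelogram_law_with_norm ℝ (1 : ℂ) c
    simpa [hadef, hbdef, hrdef, sq] using this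
  set M : ℝ := max a b with hMdef
  have haM : a ≤ M := le_max_left a b
  have hbM : b ≤ M := le_max_right a b
  have hM0 : 0 ≤ M := le_trans ha0 haM
  have hs2 : Real.sqrt 2 ^ 2 = 2 := Real.sq_sqrt (by norm_num)
  have hs0 : 0 ≤ Real.sqrt 2 := Real.sqrt_nonneg 2
  have hs1 : 1 ≤ Real.sqrt 2 := by nlinarith
  have hkey : Real.sqrt 2 ≤ M + 1 - r := by
    nlinarith [sq_nonneg (a - b), sq_nonneg (M + Real.sqrt 2 - 1 + r),
      mul_nonneg (sub_nonneg.2 hs1) (sub_nonneg.2 hr1), sq_nonneg (M - 1)]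
  have hMle : M * m + T ≤ max (a * m + T) (b * m + T) := by
    rcases max_cases a b with ⟨h, -⟩ | ⟨h, -⟩
    · rw [hMdef, h]; exact le_max_left _ _
    · rw [hMdef, h]; exact le_max_right _ _
  rw [hfnorm, hadd, hsub]
  refine le_trans ?_ hMle
  nlinarith [mul_le_mul_of_nonneg_right hkey hm.le]
end
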